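/- arXiv:2007.06047 — 6 statements merged into one kernel-verified Lean document; each statement's English description precedes it below -/
import Mathlib

section
/- Let A ∈ ℝ^{n×n} be K-monotone, let A = U₁ − V₁ be a K-weak regular splitting of type I and A = U₂ − V₂ be a K-weak regular splitting of type II. If U₁⁻¹ ≥_K U₂⁻¹, then ρ(U₁⁻¹V₁) ≤ ρ(U₂⁻¹V₂) < 1. -/
open Matrix Finset Filter
open Topology

/-- A proper cone in `ℝ^n`: a closed, pointed, solid convex cone. -/
def IsProperCone {n : ℕ} (K : Set (Fin n → ℝ)) : Prop :=
  IsClosed K ∧ Convex ℝ K ∧ (∀ c : ℝ, 0 ≤ c → ∀ x ∈ K, c • x ∈ K) ∧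
    K ∩ (-K) = {0} ∧ (interior K).Nonempty

/-- `M ≥_K 0`: the matrix `M` leaves the cone `K` invariant. -/
def KNonneg {n : ℕ} (K : Set (Fin n → ℝ)) (M : Matrix (Fin n) (Fin n) ℝ) : Prop :=
  ∀ x ∈ K, M.mulVec x ∈ K

/-- Spectral radius: the supremum of the moduli of the complex eigenvalues. -/
noncomputable def specRad {n : ℕ} (M : Matrix (Fin n) (Fin n) ℝ) : ℝ :=
  sSup ((fun z : ℂ => ‖z‖) '' spectrum ℂ (M.map Complex.ofReal))

/-- `A = U - V` is a `K`-regular splitting. -/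
def KRegularSplitting {n : ℕ} (K : Set (Fin n → ℝ))
    (A U V : Matrix (Fin n) (Fin n) ℝ) : Prop :=
  A = U - V ∧ IsUnit U ∧ KNonneg K U⁻¹ ∧ KNonneg K V

/-- `A = U - V` is a `K`-weak regular splitting of type I. -/
def KWeakRegularSplittingI {n : ℕ} (K : Set (Fin n → ℝ))
    (A U V : Matrix (Fin n) (Fin n) ℝ) : Prop :=
  A = U - V ∧ IsUnit U ∧ KNonneg K U⁻¹ ∧ KNonneg K (U⁻¹ * V)

/-- `A = U - V` is a `K`-weak regular splitting of type II. -/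
def KWeakRegularSplittingII {n : ℕ} (K : Set (Fin n → ℝ))
    (A U V : Matrix (Fin n) (Fin n) ℝ) : Prop :=
  A = U - V ∧ IsUnit U ∧ KNonneg K U⁻¹ ∧ KNonneg K (V * U⁻¹)

/-- `A` is `K`-monotone: invertible with `A⁻¹ ≥_K 0`. -/
def KMonotone {n : ℕ} (K : Set (Fin n → ℝ)) (A : Matrix (Fin n) (Fin n) ℝ) : Prop :=
  IsUnit A ∧ KNonneg K A⁻¹

/-- Two-stage iteration matrix `T_s = (F⁻¹G)^s + Σ_{j=0}^{s-1} (F⁻¹G)^j F⁻¹ V`. -/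
noncomputable def twoStageT {n : ℕ} (F G V : Matrix (Fin n) (Fin n) ℝ) (s : ℕ) :
    Matrix (Fin n) (Fin n) ℝ :=
  (F⁻¹ * G) ^ s + (∑ j ∈ Finset.range s, (F⁻¹ * G) ^ j) * (F⁻¹ * V)

/-- `T̂_s = (GF⁻¹)^s + Σ_{j=0}^{s-1} (GF⁻¹)^j V F⁻¹`. -/
noncomputable def twoStageThat {n : ℕ} (F G V : Matrix (Fin n) (Fin n) ℝ) (s : ℕ) :
    Matrix (Fin n) (Fin n) ℝ :=
  (G * F⁻¹) ^ s + (∑ j ∈ Finset.range s, (G * F⁻¹) ^ j) * (V * F⁻¹)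

/-- `Q_s = Σ_{j=0}^{s-1} (F⁻¹G)^j F⁻¹`. -/
noncomputable def twoStageQ {n : ℕ} (F G : Matrix (Fin n) (Fin n) ℝ) (s : ℕ) :
    Matrix (Fin n) (Fin n) ℝ :=
  (∑ j ∈ Finset.range s, (F⁻¹ * G) ^ j) * F⁻¹

attribute [local instance] Matrix.linftyOpNormedRing Matrix.linftyOpNormedAlgebra

namespace SpecRadAux

variable {n : ℕ} {K : Set (Fin n → ℝ)}

/-! ### Basic cone facts -/

lemma zero_mem (hK : IsProperCone K) : (0 : Fin n → ℝ) ∈ K := by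
  have h : (0 : Fin n → ℝ) ∈ K ∩ (-K) := by
    rw [hK.2.2.2.1]; exact Set.mem_singleton _
  exact h.1

lemma smul_mem (hK : IsProperCone K) {c : ℝ} (hc : 0 ≤ c) {x : Fin n → ℝ} (hx : x ∈ K) :
    c • x ∈ K := hK.2.2.1 c hc x hx

lemma add_mem (hK : IsProperCone K) {x y : Fin n → ℝ} (hx : x ∈ K) (hy : y ∈ K) :
    x + y ∈ K := by
  have h := hK.2.1 hx hy (by norm_num : (0:ℝ) ≤ 1/2) (by norm_num : (0:ℝ) ≤ 1/2) (by norm_num)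
  have h2 := smul_mem hK (by norm_num : (0:ℝ) ≤ 2) h
  have : (2:ℝ) • ((1/2:ℝ) • x + (1/2:ℝ) • y) = x + y := by
    rw [smul_add, smul_smul, smul_smul]; norm_num
  rwa [this] at h2

lemma sum_mem (hK : IsProperCone K) {ι : Type*} (s : Finset ι) (g : ι → (Fin n → ℝ))
    (h : ∀ i ∈ s, g i ∈ K) : ∑ i ∈ s, g i ∈ K :=
  Finset.sum_induction g (· ∈ K) (fun _ _ ha hb => add_mem hK ha hb) (zero_mem hK) h

lemma KNonneg.mul {M N : Matrix (Fin n) (Fin n) ℝ} (hM : KNonneg K M) (hN : KNonneg K N) :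
    KNonneg K (M * N) := fun x hx => by
  rw [← Matrix.mulVec_mulVec]; exact hM _ (hN _ hx)

lemma KNonneg.one (hK : IsProperCone K) : KNonneg K (1 : Matrix (Fin n) (Fin n) ℝ) :=
  fun x hx => by rwa [Matrix.one_mulVec]

lemma KNonneg.pow (hK : IsProperCone K) {M : Matrix (Fin n) (Fin n) ℝ} (hM : KNonneg K M)
    (m : ℕ) : KNonneg K (M ^ m) := by
  induction m with
  | zero => simpa [pow_zero] using KNonneg.one hK
  | succ m ih => rw [pow_succ]; exact KNonneg.mul ih hM

lemma sum_mulVec {ι : Type*} (s : Finset ι) (P : ι → Matrix (Fin n) (Fin n) ℝ)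
    (x : Fin n → ℝ) : (∑ i ∈ s, P i) *ᵥ x = ∑ i ∈ s, (P i) *ᵥ x := by
  classical
  induction s using Finset.induction_on with
  | empty => simp [Matrix.zero_mulVec]
  | @insert a s' ha ih => simp [Finset.sum_insert ha, Matrix.add_mulVec, ih]

lemma dotProduct_sum {ι : Type*} (s : Finset ι) (w : Fin n → ℝ) (v : ι → (Fin n → ℝ)) :
    w ⬝ᵥ (∑ i ∈ s, v i) = ∑ i ∈ s, w ⬝ᵥ (v i) := by
  classical
  induction s using Finset.induction_on with
  | empty => simp [dotProduct_zero]
  | @insert a s' ha ih => simp [Finset.sum_insert ha, dotProduct_add, ih]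

lemma sum_dotProduct' {ι : Type*} (s : Finset ι) (v : ι → (Fin n → ℝ)) (x : Fin n → ℝ) :
    (∑ i ∈ s, v i) ⬝ᵥ x = ∑ i ∈ s, (v i) ⬝ᵥ x := by
  classical
  induction s using Finset.induction_on with
  | empty => simp [zero_dotProduct]
  | @insert a s' ha ih => simp [Finset.sum_insert ha, add_dotProduct, ih]

/-! ### Strictly positive functional on a proper cone -/

lemma exists_pos_functional (hK : IsProperCone K) (hn : 0 < n) :
    ∃ (w : Fin n → ℝ) (δ : ℝ), 0 < δ ∧ ∀ x ∈ K, δ * ‖x‖ ≤ w ⬝ᵥ x := by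
  classical
  -- the dual cone
  set K' : Set (Fin n → ℝ) := {y | ∀ x ∈ K, 0 ≤ y ⬝ᵥ x} with hK'def
  -- representation of continuous linear functionals as vectors
  have rep : ∀ (f : (Fin n → ℝ) →L[ℝ] ℝ) (x : Fin n → ℝ),
      f x = (fun j => f (Pi.single j 1)) ⬝ᵥ x := by
    intro f x
    conv_lhs => rw [pi_eq_sum_univ x]
    rw [map_sum]
    simp only [dotProduct]
    refine Finset.sum_congr rfl fun j _ => ?_
    rw [f.map_smul, smul_eq_mul, mul_comm]
    congr 2
    funext i
    simp [Pi.single_apply, eq_comm]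
  -- bipolar property
  have bipolar : ∀ v : Fin n → ℝ, (∀ y ∈ K', 0 ≤ y ⬝ᵥ v) → v ∈ K := by
    intro v hv
    by_contra hvK
    obtain ⟨f, u, hfu, hufv⟩ := geometric_hahn_banach_closed_point hK.2.1 hK.1 hvK
    have hu0 : 0 < u := by simpa using hfu 0 (zero_mem hK)
    have hf0 : ∀ a ∈ K, f a ≤ 0 := by
      intro a ha
      by_contra hpos
      push_neg at hpos
      have h2 := hfu _ (smul_mem hK (by positivity : (0:ℝ) ≤ 2 * u / f a) ha)
      rw [f.map_smul, smul_eq_mul, div_mul_cancel₀ _ (ne_of_gt hpos)] at h2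
      linarith
    have hyK' : (fun j => -(f (Pi.single j 1))) ∈ K' := by
      intro x hx
      have : (fun j => -(f (Pi.single j 1))) ⬝ᵥ x = -(f x) := by
        rw [rep f x]
        simp [dotProduct, Finset.sum_neg_distrib]
      rw [this]
      linarith [hf0 x hx]
    have h3 := hv _ hyK'
    have : (fun j => -(f (Pi.single j 1))) ⬝ᵥ v = -(f v) := by
      rw [rep f v]; simp [dotProduct, Finset.sum_neg_distrib]
    rw [this] at h3
    linarith
  -- the dual cone spans
  have hspan : Submodule.span ℝ K' = ⊤ := by
    by_contra hW
    obtain ⟨v0, hv0⟩ : ∃ v0, v0 ∉ Submodule.span ℝ K' := by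
      by_contra hall
      push_neg at hall
      exact hW (Submodule.eq_top_iff'.2 hall)
    obtain ⟨f, u, hfu, hufv⟩ := geometric_hahn_banach_closed_point
      (Submodule.span ℝ K').convex (Submodule.closed_of_finiteDimensional _) hv0
    have hf0 : ∀ a ∈ Submodule.span ℝ K', f a = 0 := by
      intro a ha
      by_contra hne
      have h2 := hfu _ ((Submodule.span ℝ K').smul_mem ((u + 1) / f a) ha)
      rw [f.map_smul, smul_eq_mul, div_mul_cancel₀ _ hne] at h2
      have hu0 : 0 < u := by
        simpa using hfu 0 (Submodule.zero_mem _)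
      linarith
    set v : Fin n → ℝ := fun j => f (Pi.single j 1) with hvdef
    have hfv : ∀ x, f x = v ⬝ᵥ x := fun x => rep f x
    have hvne : v ≠ 0 := by
      intro h0
      have : f v0 = 0 := by rw [hfv, h0, zero_dotProduct]
      have hu0 : 0 < u := by simpa using hfu 0 (Submodule.zero_mem _)
      linarith
    have hzero : ∀ y ∈ K', y ⬝ᵥ v = 0 := by
      intro y hy
      have := hf0 y (Submodule.subset_span hy)
      rw [hfv] at this
      rw [dotProduct_comm]
      exact this
    have hvK : v ∈ K := bipolar v (fun y hy => le_of_eq (hzero y hy).symm)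
    have hvK2 : -v ∈ K := bipolar (-v) (fun y hy => by
      rw [dotProduct_neg, hzero y hy, neg_zero])
    have : v ∈ K ∩ (-K) := ⟨hvK, by simpa [Set.mem_neg] using hvK2⟩
    rw [hK.2.2.2.1] at this
    exact hvne this
  -- a finite subset of the dual cone that spans
  have hfin : ∃ Y : Finset (Fin n → ℝ), ↑Y ⊆ K' ∧
      ∀ x : Fin n → ℝ, (∀ y ∈ Y, y ⬝ᵥ x = 0) → x = 0 := by
    have hmem : ∀ j : Fin n, ∃ S : Finset (Fin n → ℝ), ↑S ⊆ K' ∧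
        (Pi.single j 1 : Fin n → ℝ) ∈ Submodule.span ℝ (S : Set (Fin n → ℝ)) := by
      intro j
      have : (Pi.single j 1 : Fin n → ℝ) ∈ Submodule.span ℝ K' := by
        rw [hspan]; trivial
      exact Submodule.mem_span_finite_of_mem_span this
    choose S hS hSmem using hmem
    refine ⟨Finset.univ.biUnion S, ?_, ?_⟩
    · intro y hy
      simp only [Finset.coe_biUnion, Set.mem_iUnion, Finset.mem_coe] at hy
      obtain ⟨j, _, hj⟩ := hy
      exact hS j hj
    · intro x hx
      have hallspan : ∀ z ∈ Submodule.span ℝ ((Finset.univ.biUnion S : Finset _) :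
          Set (Fin n → ℝ)), z ⬝ᵥ x = 0 := by
        intro z hz
        induction hz using Submodule.span_induction with
        | mem z hzY => exact hx z (by simpa using hzY)
        | zero => simp [zero_dotProduct]
        | add a b _ _ ha hb => rw [add_dotProduct, ha, hb, add_zero]
        | smul c a _ ha => rw [smul_dotProduct, ha, smul_zero]
      have hsingle : ∀ j : Fin n, (Pi.single j 1 : Fin n → ℝ) ⬝ᵥ x = 0 := by
        intro j
        apply hallspan
        refine Submodule.span_mono ?_ (hSmem j)
        intro y hy
        simp only [Finset.coe_biUnion, Set.mem_iUnion, Finset.mem_coe]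
        exact ⟨j, Finset.mem_univ j, hy⟩
      funext j
      have := hsingle j
      rwa [single_one_dotProduct] at this
  obtain ⟨Y, hYsub, hYspan⟩ := hfin
  set w : Fin n → ℝ := ∑ y ∈ Y, y with hwdef
  have hw_nonneg : ∀ x ∈ K, 0 ≤ w ⬝ᵥ x := by
    intro x hx
    rw [hwdef, sum_dotProduct']
    exact Finset.sum_nonneg fun y hy => hYsub hy x hx
  have hw_pos : ∀ x ∈ K, x ≠ 0 → 0 < w ⬝ᵥ x := by
    intro x hx hxne
    rcases lt_or_eq_of_le (hw_nonneg x hx) with h | h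
    · exact h
    · exfalso
      apply hxne
      apply hYspan
      intro y hy
      have hsum : ∑ y ∈ Y, y ⬝ᵥ x = 0 := by
        rw [← sum_dotProduct', ← hwdef, ← h]
      exact (Finset.sum_eq_zero_iff_of_nonneg
        (fun y hy => hYsub hy x hx)).1 hsum y hy
  -- minimize over the compact set K ∩ sphere
  have hSne : ((Metric.sphere (0 : Fin n → ℝ) 1) ∩ K).Nonempty := by
    obtain ⟨u, hu⟩ := hK.2.2.2.2
    have huK : u ∈ K := interior_subset hu
    obtain ⟨ε, hε, hball⟩ := Metric.isOpen_iff.1 isOpen_interior u hu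
    have hx0 : ∃ x0 : Fin n → ℝ, x0 ∈ K ∧ x0 ≠ 0 := by
      by_cases hu0 : u = 0
      · have i0 : Fin n := ⟨0, hn⟩
        have hxnorm : ‖(ε/2) • (Pi.single i0 1 : Fin n → ℝ)‖ = ε / 2 := by
          rw [norm_smul, Pi.norm_single, norm_one, mul_one, Real.norm_eq_abs,
            abs_of_pos (by positivity : (0:ℝ) < ε/2)]
        refine ⟨(ε/2) • (Pi.single i0 1 : Fin n → ℝ), ?_, ?_⟩
        · apply interior_subset
          apply hball
          rw [Metric.mem_ball, dist_eq_norm, hu0, sub_zero, hxnorm]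
          linarith
        · intro h0
          rw [h0, norm_zero] at hxnorm
          linarith
      · exact ⟨u, huK, hu0⟩
    obtain ⟨x0, hx0K, hx0ne⟩ := hx0
    have hnorm : ‖x0‖ ≠ 0 := norm_ne_zero_iff.2 hx0ne
    refine ⟨‖x0‖⁻¹ • x0, ?_, smul_mem hK (by positivity) hx0K⟩
    rw [Metric.mem_sphere, dist_zero_right, norm_smul, norm_inv, norm_norm]
    field_simp
  have hcomp : IsCompact ((Metric.sphere (0 : Fin n → ℝ) 1) ∩ K) :=
    (isCompact_sphere 0 1).inter_right hK.1
  have hcont : Continuous fun x : Fin n → ℝ => w ⬝ᵥ x := by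
    unfold dotProduct
    exact continuous_finset_sum _ fun j _ => (continuous_const.mul (continuous_apply j))
  obtain ⟨z0, hz0, hmin⟩ := hcomp.exists_isMinOn hSne hcont.continuousOn
  have hz0K : z0 ∈ K := hz0.2
  have hz0ne : z0 ≠ 0 := by
    intro h
    have := hz0.1
    rw [h] at this
    simp at this
  refine ⟨w, w ⬝ᵥ z0, hw_pos z0 hz0K hz0ne, ?_⟩
  intro x hx
  by_cases hx0 : x = 0
  · simp [hx0, dotProduct_zero]
  · have hnorm : (0:ℝ) < ‖x‖ := norm_pos_iff.2 hx0
    have hzx : ‖x‖⁻¹ • x ∈ (Metric.sphere (0 : Fin n → ℝ) 1) ∩ K := by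
      refine ⟨?_, smul_mem hK (by positivity) hx⟩
      rw [Metric.mem_sphere, dist_zero_right, norm_smul, norm_inv, norm_norm]
      field_simp
    have h2 : w ⬝ᵥ z0 ≤ ‖x‖⁻¹ * (w ⬝ᵥ x) := by
      have h3 := hmin hzx
      simpa [dotProduct_smul] using h3
    calc (w ⬝ᵥ z0) * ‖x‖ ≤ (‖x‖⁻¹ * (w ⬝ᵥ x)) * ‖x‖ := by
          apply mul_le_mul_of_nonneg_right h2 (le_of_lt hnorm)
      _ = w ⬝ᵥ x := by field_simp

/-! ### Convergence from bounded partial sums -/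

lemma mulVec_tendsto_zero (hK : IsProperCone K) {w : Fin n → ℝ} {δ : ℝ} (hδ : 0 < δ)
    (hw : ∀ x ∈ K, δ * ‖x‖ ≤ w ⬝ᵥ x)
    (P : ℕ → Matrix (Fin n) (Fin n) ℝ) (B : Matrix (Fin n) (Fin n) ℝ)
    (hP : ∀ m, KNonneg K (P m))
    (hB : ∀ m, KNonneg K (B - ∑ j ∈ Finset.range m, P j)) :
    ∀ y : Fin n → ℝ, Tendsto (fun m => (P m) *ᵥ y) atTop (𝓝 0) := by
  have hwn : ∀ x ∈ K, 0 ≤ w ⬝ᵥ x := fun x hx =>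
    le_trans (by positivity) (hw x hx)
  -- step 1 : for `x ∈ K`
  have key : ∀ x ∈ K, Tendsto (fun m => (P m) *ᵥ x) atTop (𝓝 0) := by
    intro x hx
    set a : ℕ → ℝ := fun m => w ⬝ᵥ ((P m) *ᵥ x) with hadef
    have ha : ∀ m, 0 ≤ a m := fun m => hwn _ (hP m x hx)
    have hbound : ∀ m, ∑ j ∈ Finset.range m, a j ≤ w ⬝ᵥ (B *ᵥ x) := by
      intro m
      have h1 : ∑ j ∈ Finset.range m, a j
          = w ⬝ᵥ ((∑ j ∈ Finset.range m, P j) *ᵥ x) := by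
        rw [sum_mulVec, dotProduct_sum]
      have h2 : w ⬝ᵥ (B *ᵥ x) - w ⬝ᵥ ((∑ j ∈ Finset.range m, P j) *ᵥ x)
          = w ⬝ᵥ ((B - ∑ j ∈ Finset.range m, P j) *ᵥ x) := by
        rw [Matrix.sub_mulVec, dotProduct_sub]
      have h3 : 0 ≤ w ⬝ᵥ ((B - ∑ j ∈ Finset.range m, P j) *ᵥ x) :=
        hwn _ (hB m x hx)
      rw [h1]; linarith
    have hsum : Summable a := summable_of_sum_range_le ha hbound
    have ha0 : Tendsto a atTop (𝓝 0) := hsum.tendsto_atTop_zero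
    rw [tendsto_zero_iff_norm_tendsto_zero]
    apply squeeze_zero (fun m => norm_nonneg _) (fun m => ?_)
      (by simpa using ha0.const_mul δ⁻¹)
    calc ‖(P m) *ᵥ x‖ = δ⁻¹ * (δ * ‖(P m) *ᵥ x‖) := by
          rw [← mul_assoc, inv_mul_cancel₀ (ne_of_gt hδ), one_mul]
      _ ≤ δ⁻¹ * a m := by
          apply mul_le_mul_of_nonneg_left _ (le_of_lt (inv_pos.2 hδ))
          exact hw _ (hP m x hx)
  -- step 2 : general `y`
  intro y
  by_cases hy : y = 0
  · simpa [hy, Matrix.mulVec_zero] using tendsto_const_nhds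
  obtain ⟨u, hu⟩ := hK.2.2.2.2
  have huK : u ∈ K := interior_subset hu
  obtain ⟨ε, hε, hball⟩ := Metric.isOpen_iff.1 isOpen_interior u hu
  have hny : (0:ℝ) < ‖y‖ := norm_pos_iff.2 hy
  set t : ℝ := ε / 2 / ‖y‖ with htdef
  have ht : 0 < t := by positivity
  have hmem : u + t • y ∈ K := by
    apply interior_subset
    apply hball
    rw [Metric.mem_ball, dist_eq_norm, add_sub_cancel_left, norm_smul,
      Real.norm_eq_abs, abs_of_pos ht, htdef]
    rw [div_mul_cancel₀ _ (ne_of_gt hny)]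
    linarith
  have g1 := key _ hmem
  have g2 := key _ huK
  have heq : ∀ m, (P m) *ᵥ y = t⁻¹ • ((P m) *ᵥ (u + t • y) - (P m) *ᵥ u) := by
    intro m
    rw [Matrix.mulVec_add, Matrix.mulVec_smul, add_sub_cancel_left, smul_smul,
      inv_mul_cancel₀ (ne_of_gt ht), one_smul]
  have h5 : Tendsto (fun m => t⁻¹ • ((P m) *ᵥ (u + t • y) - (P m) *ᵥ u)) atTop (𝓝 0) := by
    simpa using (g1.sub g2).const_smul (t⁻¹)
  exact h5.congr fun m => (heq m).symm

/-! ### Matrix norm estimates (linfty operator norm) -/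

lemma norm_le_sum_mulVec (M : Matrix (Fin n) (Fin n) ℝ) :
    ‖M‖ ≤ ∑ j, ‖M *ᵥ Pi.single j 1‖ := by
  classical
  have h : ‖M‖₊ ≤ ∑ j, ‖M *ᵥ Pi.single j 1‖₊ := by
    rw [Matrix.linfty_opNNNorm_def]
    apply Finset.sup_le
    intro i _
    apply Finset.sum_le_sum
    intro j _
    have h1 : (M *ᵥ Pi.single j 1) i = M i j := by
      simp [Matrix.mulVec_single]
    calc ‖M i j‖₊ = ‖(M *ᵥ Pi.single j 1) i‖₊ := by rw [h1]
      _ ≤ ‖M *ᵥ Pi.single j 1‖₊ := nnnorm_le_pi_nnnorm _ _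
  have h2 := NNReal.coe_le_coe.2 h
  rw [NNReal.coe_sum] at h2
  simpa only [coe_nnnorm] using h2

lemma norm_tendsto_zero (P : ℕ → Matrix (Fin n) (Fin n) ℝ)
    (h : ∀ y : Fin n → ℝ, Tendsto (fun m => (P m) *ᵥ y) atTop (𝓝 0)) :
    Tendsto (fun m => ‖P m‖) atTop (𝓝 0) := by
  classical
  apply squeeze_zero (fun m => norm_nonneg _) (fun m => norm_le_sum_mulVec (P m))
  have : Tendsto (fun m => ∑ j, ‖(P m) *ᵥ Pi.single j 1‖) atTop
      (𝓝 (∑ j : Fin n, (0:ℝ))) := by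
    apply tendsto_finset_sum
    intro j _
    simpa using (h (Pi.single j 1)).norm
  simpa using this

/-- Global operator bound from a bound on the cone. -/
lemma exists_global_const (hK : IsProperCone K) :
    ∃ k : ℝ, 0 ≤ k ∧ ∀ (M : Matrix (Fin n) (Fin n) ℝ) (c : ℝ), 0 ≤ c →
      (∀ x ∈ K, ‖M *ᵥ x‖ ≤ c * ‖x‖) → ∀ y : Fin n → ℝ, ‖M *ᵥ y‖ ≤ k * c * ‖y‖ := by
  obtain ⟨u, hu⟩ := hK.2.2.2.2
  have huK : u ∈ K := interior_subset hu
  obtain ⟨ε, hε, hball⟩ := Metric.isOpen_iff.1 isOpen_interior u hu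
  refine ⟨(4 * ‖u‖ + ε) / ε, by positivity, ?_⟩
  intro M c hc hcone y
  by_cases hy : y = 0
  · simp [hy, Matrix.mulVec_zero]
  have hny : (0:ℝ) < ‖y‖ := norm_pos_iff.2 hy
  set t : ℝ := ε / 2 / ‖y‖ with htdef
  have ht : 0 < t := by positivity
  have hmem : u + t • y ∈ K := by
    apply interior_subset
    apply hball
    rw [Metric.mem_ball, dist_eq_norm, add_sub_cancel_left, norm_smul,
      Real.norm_eq_abs, abs_of_pos ht, htdef, div_mul_cancel₀ _ (ne_of_gt hny)]
    linarith
  have heq : M *ᵥ y = t⁻¹ • (M *ᵥ (u + t • y) - M *ᵥ u) := by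
    rw [Matrix.mulVec_add, Matrix.mulVec_smul, add_sub_cancel_left, smul_smul,
      inv_mul_cancel₀ (ne_of_gt ht), one_smul]
  have hb1 : ‖M *ᵥ (u + t • y)‖ ≤ c * (‖u‖ + ε / 2) := by
    calc ‖M *ᵥ (u + t • y)‖ ≤ c * ‖u + t • y‖ := hcone _ hmem
      _ ≤ c * (‖u‖ + ε / 2) := by
          apply mul_le_mul_of_nonneg_left _ hc
          calc ‖u + t • y‖ ≤ ‖u‖ + ‖t • y‖ := norm_add_le _ _
            _ = ‖u‖ + ε / 2 := by
                rw [norm_smul, Real.norm_eq_abs, abs_of_pos ht, htdef,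
                  div_mul_cancel₀ _ (ne_of_gt hny)]
  have hb2 : ‖M *ᵥ u‖ ≤ c * ‖u‖ := hcone _ huK
  have hbound : ‖M *ᵥ y‖ ≤ t⁻¹ * (c * (‖u‖ + ε / 2) + c * ‖u‖) := by
    rw [heq, norm_smul, Real.norm_eq_abs, abs_of_pos (inv_pos.2 ht)]
    apply mul_le_mul_of_nonneg_left _ (le_of_lt (inv_pos.2 ht))
    calc ‖M *ᵥ (u + t • y) - M *ᵥ u‖ ≤ ‖M *ᵥ (u + t • y)‖ + ‖M *ᵥ u‖ := norm_sub_le _ _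
      _ ≤ c * (‖u‖ + ε / 2) + c * ‖u‖ := add_le_add hb1 hb2
  have htinv : t⁻¹ = 2 * ‖y‖ / ε := by
    rw [htdef]
    field_simp
  calc ‖M *ᵥ y‖ ≤ t⁻¹ * (c * (‖u‖ + ε / 2) + c * ‖u‖) := hbound
    _ = (2 * ‖y‖ / ε) * (c * (‖u‖ + ε / 2) + c * ‖u‖) := by rw [htinv]
    _ = (4 * ‖u‖ + ε) / ε * c * ‖y‖ := by
        field_simp
        ring

lemma dotProduct_le_norm (w z : Fin n → ℝ) : w ⬝ᵥ z ≤ (∑ j, |w j|) * ‖z‖ := by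
  calc w ⬝ᵥ z = ∑ j, w j * z j := rfl
    _ ≤ ∑ j, |w j| * ‖z‖ := by
        apply Finset.sum_le_sum
        intro j _
        calc w j * z j ≤ |w j * z j| := le_abs_self _
          _ = |w j| * |z j| := abs_mul _ _
          _ ≤ |w j| * ‖z‖ := by
              apply mul_le_mul_of_nonneg_left _ (abs_nonneg _)
              rw [← Real.norm_eq_abs]
              exact norm_le_pi_norm z j
    _ = (∑ j, |w j|) * ‖z‖ := by rw [Finset.sum_mul]

/-! ### Spectral radius estimates -/

section Spectral

variable (hn : 0 < n)

noncomputable def phi : Matrix (Fin n) (Fin n) ℝ →+* Matrix (Fin n) (Fin n) ℂ :=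
  (Complex.ofRealHom.mapMatrix)

lemma phi_apply (M : Matrix (Fin n) (Fin n) ℝ) : phi M = M.map Complex.ofReal := rfl

lemma norm_phi (M : Matrix (Fin n) (Fin n) ℝ) : ‖phi M‖ = ‖M‖ := by
  have h : ‖phi M‖₊ = ‖M‖₊ := by
    rw [Matrix.linfty_opNNNorm_def, Matrix.linfty_opNNNorm_def]
    congr 1
    funext i
    apply Finset.sum_congr rfl
    intro j _
    rw [phi_apply, Matrix.map_apply, Complex.nnnorm_real]
  rw [← coe_nnnorm, ← coe_nnnorm, h]

lemma specRad_eq (M : Matrix (Fin n) (Fin n) ℝ) :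
    specRad M = sSup ((fun z : ℂ => ‖z‖) '' spectrum ℂ (phi M)) := rfl

include hn

lemma specRad_nonneg' (M : Matrix (Fin n) (Fin n) ℝ) : 0 ≤ specRad M :=
  Real.sSup_nonneg (by rintro r ⟨μ, _, rfl⟩; exact norm_nonneg μ)

lemma eigen_pow_le (M : Matrix (Fin n) (Fin n) ℝ) {lam : ℂ}
    (hlam : lam ∈ spectrum ℂ (phi M)) (m : ℕ) :
    ‖lam‖ ^ m ≤ ‖(M ^ m : Matrix (Fin n) (Fin n) ℝ)‖ := by
  haveI : Nonempty (Fin n) := ⟨⟨0, hn⟩⟩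
  have h1 : lam ^ m ∈ spectrum ℂ ((phi M) ^ m) :=
    spectrum.pow_image_subset (phi M) m ⟨lam, hlam, rfl⟩
  have h2 : ‖lam ^ m‖ ≤ ‖(phi M) ^ m‖ := spectrum.norm_le_norm_of_mem h1
  rwa [norm_pow, ← map_pow, norm_phi] at h2

lemma specRad_lt_one {T : Matrix (Fin n) (Fin n) ℝ}
    (h : Tendsto (fun m => ‖(T ^ m : Matrix (Fin n) (Fin n) ℝ)‖) atTop (𝓝 0)) :
    specRad T < 1 := by
  obtain ⟨m, hm1, hm2⟩ : ∃ m : ℕ, 1 ≤ m ∧ ‖(T ^ m : Matrix (Fin n) (Fin n) ℝ)‖ < 1/2 := by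
    have := (h.eventually (gt_mem_nhds (by norm_num : (0:ℝ) < 1/2))).and
      (eventually_ge_atTop 1)
    obtain ⟨m, hm⟩ := this.exists
    exact ⟨m, hm.2, hm.1⟩
  have hmpos : (0:ℝ) < m := by exact_mod_cast hm1
  set q : ℝ := (1/2 : ℝ) ^ (1/(m:ℝ)) with hq
  have hq1 : q < 1 := by
    apply Real.rpow_lt_one (by norm_num) (by norm_num)
    positivity
  have hq0 : 0 ≤ q := Real.rpow_nonneg (by norm_num) _
  have hle : specRad T ≤ q := by
    rw [specRad_eq]
    apply Real.sSup_le _ hq0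
    rintro r ⟨lam, hlam, rfl⟩
    have h1 : ‖lam‖ ^ m ≤ 1/2 := le_of_lt (lt_of_le_of_lt (eigen_pow_le hn T hlam m) hm2)
    have h2 : (‖lam‖ ^ m) ^ (1/(m:ℝ)) ≤ q := by
      apply Real.rpow_le_rpow (by positivity) h1 (by positivity)
    rwa [← Real.rpow_natCast ‖lam‖ m, ← Real.rpow_mul (norm_nonneg _),
      mul_one_div, div_self (ne_of_gt hmpos), Real.rpow_one] at h2
  linarith

lemma rpow_root_tendsto_one {c : ℝ} (hc : 0 < c) :
    Tendsto (fun m : ℕ => c ^ (1/(m:ℝ))) atTop (𝓝 1) := by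
  have heq : ∀ m : ℕ, c ^ (1/(m:ℝ)) = Real.exp (Real.log c * (1/(m:ℝ))) := by
    intro m
    rw [Real.rpow_def_of_pos hc]
  simp only [heq]
  have h1 : Tendsto (fun m : ℕ => Real.log c * (1/(m:ℝ))) atTop (𝓝 0) := by
    simpa using (tendsto_one_div_atTop_nhds_zero_nat).const_mul (Real.log c)
  simpa [Function.comp_def] using (Real.continuous_exp.tendsto 0).comp h1

lemma specRad_le_specRad {S T : Matrix (Fin n) (Fin n) ℝ} (c : ℝ)
    (h : ∀ m : ℕ, ‖(S ^ m : Matrix (Fin n) (Fin n) ℝ)‖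
      ≤ c * ‖(T ^ m : Matrix (Fin n) (Fin n) ℝ)‖) :
    specRad S ≤ specRad T := by
  haveI : Nonempty (Fin n) := ⟨⟨0, hn⟩⟩
  set c1 : ℝ := |c| + 1 with hc1def
  have hc1 : 0 < c1 := by positivity
  have h' : ∀ m : ℕ, ‖(S ^ m : Matrix (Fin n) (Fin n) ℝ)‖
      ≤ c1 * ‖(T ^ m : Matrix (Fin n) (Fin n) ℝ)‖ := by
    intro m
    calc ‖(S ^ m : Matrix (Fin n) (Fin n) ℝ)‖ ≤ c * ‖(T ^ m : Matrix (Fin n) (Fin n) ℝ)‖ := h m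
      _ ≤ c1 * ‖(T ^ m : Matrix (Fin n) (Fin n) ℝ)‖ := by
          apply mul_le_mul_of_nonneg_right _ (norm_nonneg _)
          calc c ≤ |c| := le_abs_self c
            _ ≤ c1 := by rw [hc1def]; linarith
  -- Gelfand's formula for `phi T`
  set L : ENNReal := spectralRadius ℂ (phi T) with hLdef
  have hLne : L ≠ ⊤ := by
    apply ne_top_of_le_ne_top ?_ (spectrum.spectralRadius_le_nnnorm (phi T))
    exact ENNReal.coe_ne_top
  have hgelf := spectrum.pow_norm_pow_one_div_tendsto_nhds_spectralRadius (phi T)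
  have hgelf' : Tendsto (fun m : ℕ => ‖(phi T) ^ m‖ ^ (1/(m:ℝ))) atTop (𝓝 L.toReal) := by
    have := (ENNReal.tendsto_toReal hLne).comp hgelf
    have heq : ∀ m : ℕ, (ENNReal.ofReal (‖(phi T) ^ m‖ ^ (1/(m:ℝ)))).toReal
        = ‖(phi T) ^ m‖ ^ (1/(m:ℝ)) :=
      fun m => ENNReal.toReal_ofReal (Real.rpow_nonneg (norm_nonneg _) _)
    simpa only [Function.comp_def, heq] using this
  -- each eigenvalue of `phi S` is at most `L.toReal`
  have heig : ∀ lam ∈ spectrum ℂ (phi S), ‖lam‖ ≤ L.toReal := by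
    intro lam hlam
    have hb : ∀ m : ℕ, 1 ≤ m → ‖lam‖ ≤ c1 ^ (1/(m:ℝ)) * ‖(phi T) ^ m‖ ^ (1/(m:ℝ)) := by
      intro m hm
      have hmpos : (0:ℝ) < m := by exact_mod_cast hm
      have h1 : ‖lam‖ ^ m ≤ c1 * ‖(phi T) ^ m‖ := by
        calc ‖lam‖ ^ m ≤ ‖(S ^ m : Matrix (Fin n) (Fin n) ℝ)‖ := eigen_pow_le hn S hlam m
          _ ≤ c1 * ‖(T ^ m : Matrix (Fin n) (Fin n) ℝ)‖ := h' m
          _ = c1 * ‖(phi T) ^ m‖ := by rw [← map_pow, norm_phi]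
      have h2 : (‖lam‖ ^ m) ^ (1/(m:ℝ)) ≤ (c1 * ‖(phi T) ^ m‖) ^ (1/(m:ℝ)) :=
        Real.rpow_le_rpow (by positivity) h1 (by positivity)
      rwa [← Real.rpow_natCast ‖lam‖ m, ← Real.rpow_mul (norm_nonneg _),
        mul_one_div, div_self (ne_of_gt hmpos), Real.rpow_one,
        Real.mul_rpow (le_of_lt hc1) (norm_nonneg _)] at h2
    have hprod : Tendsto (fun m : ℕ => c1 ^ (1/(m:ℝ)) * ‖(phi T) ^ m‖ ^ (1/(m:ℝ)))
        atTop (𝓝 (1 * L.toReal)) := (rpow_root_tendsto_one hn hc1).mul hgelf'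
    rw [one_mul] at hprod
    exact ge_of_tendsto hprod (eventually_atTop.mpr ⟨1, hb⟩)
  -- `L.toReal ≤ specRad T`
  have hbddT : BddAbove ((fun z : ℂ => ‖z‖) '' spectrum ℂ (phi T)) := by
    refine ⟨‖phi T‖, ?_⟩
    rintro r ⟨μ, hμ, rfl⟩
    exact spectrum.norm_le_norm_of_mem hμ
  have hLle : L.toReal ≤ specRad T := by
    have h1 : L ≤ ENNReal.ofReal (specRad T) := by
      rw [hLdef, spectralRadius]
      apply iSup₂_le
      intro μ hμ
      rw [← enorm_eq_nnnorm, ← ofReal_norm]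
      apply ENNReal.ofReal_le_ofReal
      rw [specRad_eq]
      exact le_csSup hbddT ⟨μ, hμ, rfl⟩
    calc L.toReal ≤ (ENNReal.ofReal (specRad T)).toReal :=
          ENNReal.toReal_mono ENNReal.ofReal_ne_top h1
      _ = specRad T := ENNReal.toReal_ofReal (specRad_nonneg' hn T)
  -- conclude
  rw [specRad_eq S]
  apply Real.sSup_le _ (specRad_nonneg' hn T)
  rintro r ⟨lam, hlam, rfl⟩
  calc (fun z : ℂ => ‖z‖) lam = ‖lam‖ := rfl
    _ ≤ L.toReal := heig lam hlam
    _ ≤ specRad T := hLle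

omit hn

lemma specRad_conj {U M : Matrix (Fin n) (Fin n) ℝ} (hU : IsUnit U.det) :
    specRad (U⁻¹ * M * U) = specRad M := by
  have h1 : phi U * phi U⁻¹ = 1 := by
    rw [← _root_.map_mul, Matrix.mul_nonsing_inv _ hU, _root_.map_one]
  have h2 : phi U⁻¹ * phi U = 1 := by
    rw [← _root_.map_mul, Matrix.nonsing_inv_mul _ hU, _root_.map_one]
  set w : (Matrix (Fin n) (Fin n) ℂ)ˣ := ⟨phi U, phi U⁻¹, h1, h2⟩ with hwdef
  have hspec : spectrum ℂ (phi (U⁻¹ * M * U)) = spectrum ℂ (phi M) := by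
    have heq2 : phi (U⁻¹ * M * U) = (↑w⁻¹ : Matrix (Fin n) (Fin n) ℂ) * phi M * (↑w : Matrix (Fin n) (Fin n) ℂ) := by
      rw [_root_.map_mul, _root_.map_mul]; rfl
    rw [heq2]
    exact spectrum.units_conjugate' (R := ℂ)
  rw [specRad_eq, specRad_eq, hspec]

end Spectral

end SpecRadAux

theorem stmt_1 {n : ℕ} (K : Set (Fin n → ℝ)) (hK : IsProperCone K)
    (A U₁ V₁ U₂ V₂ : Matrix (Fin n) (Fin n) ℝ)
    (hmono : KMonotone K A)
    (h₁ : KWeakRegularSplittingI K A U₁ V₁)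
    (h₂ : KWeakRegularSplittingII K A U₂ V₂)
    (hU : KNonneg K (U₁⁻¹ - U₂⁻¹)) :
    specRad (U₁⁻¹ * V₁) ≤ specRad (U₂⁻¹ * V₂) ∧ specRad (U₂⁻¹ * V₂) < 1 := by
  classical
  rcases Nat.eq_zero_or_pos n with hn0 | hn
  · subst hn0
    have hspec : ∀ M : Matrix (Fin 0) (Fin 0) ℝ, specRad M = 0 := by
      intro M
      haveI hsub : Subsingleton (Matrix (Fin 0) (Fin 0) ℂ) :=
        ⟨fun a b => by ext i; exact i.elim0⟩
      have hempty : spectrum ℂ (M.map Complex.ofReal) = ∅ := by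
        rw [Set.eq_empty_iff_forall_notMem]
        intro z hz
        exact (spectrum.mem_iff.1 hz) (isUnit_of_subsingleton _)
      rw [specRad, hempty, Set.image_empty, Real.sSup_empty]
    rw [hspec, hspec]
    norm_num
  obtain ⟨hA1, hAinv⟩ := hmono
  obtain ⟨hsplit1, hU1unit, hU1inv, hT⟩ := h₁
  obtain ⟨hsplit2, hU2unit, hU2inv, hThat⟩ := h₂
  have hAd : IsUnit A.det := (Matrix.isUnit_iff_isUnit_det A).1 hA1
  have hU1d : IsUnit U₁.det := (Matrix.isUnit_iff_isUnit_det U₁).1 hU1unit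
  have hU2d : IsUnit U₂.det := (Matrix.isUnit_iff_isUnit_det U₂).1 hU2unit
  set T := U₁⁻¹ * V₁ with hTdef
  set Th := V₂ * U₂⁻¹ with hThdef
  have hUA1 : U₁⁻¹ * A = 1 - T := by
    rw [hsplit1, Matrix.mul_sub, Matrix.nonsing_inv_mul _ hU1d]
  have hAU2 : A * U₂⁻¹ = 1 - Th := by
    rw [hsplit2, Matrix.sub_mul, Matrix.mul_nonsing_inv _ hU2d]
  have hAAinv : A * A⁻¹ = 1 := Matrix.mul_nonsing_inv _ hAd
  have hAinvA : A⁻¹ * A = 1 := Matrix.nonsing_inv_mul _ hAd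
  obtain ⟨w, δ, hδ, hw⟩ := SpecRadAux.exists_pos_functional hK hn
  obtain ⟨k, hk0, hkprop⟩ := SpecRadAux.exists_global_const hK
  -- ### type II series and `specRad Th < 1`
  have hid2 : ∀ m : ℕ, A⁻¹ - ∑ j ∈ Finset.range m, (U₂⁻¹ * Th ^ j) = A⁻¹ * Th ^ m := by
    intro m
    have hU2A : A⁻¹ * (1 - Th) = U₂⁻¹ := by
      rw [← hAU2, ← Matrix.mul_assoc, hAinvA, Matrix.one_mul]
    have hgeom : (1 - Th) * (∑ j ∈ Finset.range m, Th ^ j) = 1 - Th ^ m := by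
      have h0 := mul_geom_sum Th m
      calc (1 - Th) * (∑ j ∈ Finset.range m, Th ^ j)
          = -((Th - 1) * ∑ j ∈ Finset.range m, Th ^ j) := by noncomm_ring
        _ = -(Th ^ m - 1) := by rw [h0]
        _ = 1 - Th ^ m := by noncomm_ring
    calc A⁻¹ - ∑ j ∈ Finset.range m, (U₂⁻¹ * Th ^ j)
        = A⁻¹ - U₂⁻¹ * ∑ j ∈ Finset.range m, Th ^ j := by rw [Finset.mul_sum]
      _ = A⁻¹ - (A⁻¹ * (1 - Th)) * ∑ j ∈ Finset.range m, Th ^ j := by rw [hU2A]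
      _ = A⁻¹ - A⁻¹ * ((1 - Th) * ∑ j ∈ Finset.range m, Th ^ j) := by
          rw [Matrix.mul_assoc]
      _ = A⁻¹ - A⁻¹ * (1 - Th ^ m) := by rw [hgeom]
      _ = A⁻¹ * Th ^ m := by noncomm_ring
  have hPTh : ∀ m : ℕ, KNonneg K (U₂⁻¹ * Th ^ m) :=
    fun m => SpecRadAux.KNonneg.mul hU2inv (SpecRadAux.KNonneg.pow hK hThat m)
  have hBTh : ∀ m : ℕ, KNonneg K (A⁻¹ - ∑ j ∈ Finset.range m, (U₂⁻¹ * Th ^ j)) := by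
    intro m
    rw [hid2]
    exact SpecRadAux.KNonneg.mul hAinv (SpecRadAux.KNonneg.pow hK hThat m)
  have hvTh := SpecRadAux.mulVec_tendsto_zero hK hδ hw _ _ hPTh hBTh
  have hvTh2 : ∀ y : Fin n → ℝ, Tendsto (fun m => (Th ^ m) *ᵥ y) atTop (𝓝 0) := by
    intro y
    have hcont : Continuous fun v : Fin n → ℝ => U₂ *ᵥ v := by
      have h0 : ⇑(Matrix.mulVecLin U₂) = fun v : Fin n → ℝ => U₂ *ᵥ v :=
        funext fun v => Matrix.mulVecLin_apply _ _
      exact h0 ▸ (Matrix.mulVecLin U₂).continuous_of_finiteDimensional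
    have h2 := (hcont.tendsto 0).comp (hvTh y)
    have h3 : Tendsto (fun m => (Th ^ m) *ᵥ y) atTop (𝓝 (U₂ *ᵥ (0 : Fin n → ℝ))) := by
      apply h2.congr
      intro m
      show U₂ *ᵥ ((U₂⁻¹ * Th ^ m) *ᵥ y) = (Th ^ m) *ᵥ y
      rw [Matrix.mulVec_mulVec, ← Matrix.mul_assoc,
        Matrix.mul_nonsing_inv _ hU2d, Matrix.one_mul]
    simpa [Matrix.mulVec_zero] using h3
  have hnTh := SpecRadAux.norm_tendsto_zero (fun m => Th ^ m) hvTh2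
  have hlt1 : specRad Th < 1 := SpecRadAux.specRad_lt_one hn hnTh
  have hsim : specRad (U₂⁻¹ * V₂) = specRad Th := by
    have hconj : U₂⁻¹ * Th * U₂ = U₂⁻¹ * V₂ := by
      calc U₂⁻¹ * (V₂ * U₂⁻¹) * U₂ = U₂⁻¹ * V₂ * (U₂⁻¹ * U₂) := by
            simp only [Matrix.mul_assoc]
        _ = U₂⁻¹ * V₂ := by rw [Matrix.nonsing_inv_mul _ hU2d, Matrix.mul_one]
    rw [← hconj]
    exact SpecRadAux.specRad_conj hU2d
  -- ### comparison
  have hTA : T * A⁻¹ = A⁻¹ - U₁⁻¹ := by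
    calc T * A⁻¹ = (1 - (1 - T)) * A⁻¹ := by noncomm_ring
      _ = (1 - U₁⁻¹ * A) * A⁻¹ := by rw [hUA1]
      _ = A⁻¹ - U₁⁻¹ * (A * A⁻¹) := by noncomm_ring
      _ = A⁻¹ - U₁⁻¹ := by rw [hAAinv, Matrix.mul_one]
  have hATh : A⁻¹ * Th = A⁻¹ - U₂⁻¹ := by
    calc A⁻¹ * Th = A⁻¹ * (1 - (1 - Th)) := by noncomm_ring
      _ = A⁻¹ * (1 - A * U₂⁻¹) := by rw [hAU2]
      _ = A⁻¹ - (A⁻¹ * A) * U₂⁻¹ := by noncomm_ring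
      _ = A⁻¹ - U₂⁻¹ := by rw [hAinvA, Matrix.one_mul]
  have hD : ∀ m : ℕ, KNonneg K (A⁻¹ * Th ^ m - T ^ m * A⁻¹) := by
    intro m
    induction m with
    | zero =>
      have h0 : A⁻¹ * Th ^ 0 - T ^ 0 * A⁻¹ = 0 := by simp
      rw [h0]
      intro x hx
      rw [Matrix.zero_mulVec]
      exact SpecRadAux.zero_mem hK
    | succ m ih =>
      have heq : A⁻¹ * Th ^ (m+1) - T ^ (m+1) * A⁻¹
          = (U₁⁻¹ - U₂⁻¹) * Th ^ m + T * (A⁻¹ * Th ^ m - T ^ m * A⁻¹) := by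
        have e1 : A⁻¹ * Th ^ (m+1) = (A⁻¹ - U₂⁻¹) * Th ^ m := by
          rw [pow_succ', ← Matrix.mul_assoc, hATh]
        have e2 : T * (A⁻¹ * Th ^ m) = (A⁻¹ - U₁⁻¹) * Th ^ m := by
          rw [← Matrix.mul_assoc, hTA]
        rw [e1, Matrix.mul_sub, e2, pow_succ']
        noncomm_ring
      rw [heq]
      intro x hx
      rw [Matrix.add_mulVec]
      exact SpecRadAux.add_mem hK
        (SpecRadAux.KNonneg.mul hU (SpecRadAux.KNonneg.pow hK hThat m) x hx)
        (SpecRadAux.KNonneg.mul hT ih x hx)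
  set κ : ℝ := ∑ j, |w j| with hκdef
  have hκ0 : 0 ≤ κ := Finset.sum_nonneg fun j _ => abs_nonneg _
  have hconebound : ∀ m : ℕ, ∀ x ∈ K, ‖(T ^ m * A⁻¹) *ᵥ x‖
      ≤ (δ⁻¹ * (κ * ‖A⁻¹‖) * ‖(Th ^ m : Matrix (Fin n) (Fin n) ℝ)‖) * ‖x‖ := by
    intro m x hx
    have hy1K : (T ^ m * A⁻¹) *ᵥ x ∈ K :=
      SpecRadAux.KNonneg.mul (SpecRadAux.KNonneg.pow hK hT m) hAinv x hx
    have h1 : δ * ‖(T ^ m * A⁻¹) *ᵥ x‖ ≤ w ⬝ᵥ ((T ^ m * A⁻¹) *ᵥ x) := hw _ hy1K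
    have h2 : w ⬝ᵥ ((T ^ m * A⁻¹) *ᵥ x) ≤ w ⬝ᵥ ((A⁻¹ * Th ^ m) *ᵥ x) := by
      have hdm : 0 ≤ w ⬝ᵥ ((A⁻¹ * Th ^ m - T ^ m * A⁻¹) *ᵥ x) := by
        have hmem := hD m x hx
        calc (0:ℝ) ≤ δ * ‖(A⁻¹ * Th ^ m - T ^ m * A⁻¹) *ᵥ x‖ := by positivity
          _ ≤ _ := hw _ hmem
      have hsplit : w ⬝ᵥ ((A⁻¹ * Th ^ m) *ᵥ x) - w ⬝ᵥ ((T ^ m * A⁻¹) *ᵥ x)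
          = w ⬝ᵥ ((A⁻¹ * Th ^ m - T ^ m * A⁻¹) *ᵥ x) := by
        rw [Matrix.sub_mulVec, dotProduct_sub]
      linarith
    have h3 : w ⬝ᵥ ((A⁻¹ * Th ^ m) *ᵥ x) ≤ κ * ‖(A⁻¹ * Th ^ m) *ᵥ x‖ :=
      SpecRadAux.dotProduct_le_norm w _
    have h4 : ‖(A⁻¹ * Th ^ m) *ᵥ x‖ ≤ ‖A⁻¹‖ * (‖(Th ^ m : Matrix (Fin n) (Fin n) ℝ)‖ * ‖x‖) := by
      rw [← Matrix.mulVec_mulVec]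
      calc ‖A⁻¹ *ᵥ ((Th ^ m) *ᵥ x)‖ ≤ ‖A⁻¹‖ * ‖(Th ^ m) *ᵥ x‖ :=
            Matrix.linfty_opNorm_mulVec _ _
        _ ≤ ‖A⁻¹‖ * (‖(Th ^ m : Matrix (Fin n) (Fin n) ℝ)‖ * ‖x‖) := by
            apply mul_le_mul_of_nonneg_left (Matrix.linfty_opNorm_mulVec _ _) (norm_nonneg _)
    have h5 : δ * ‖(T ^ m * A⁻¹) *ᵥ x‖
        ≤ κ * (‖A⁻¹‖ * (‖(Th ^ m : Matrix (Fin n) (Fin n) ℝ)‖ * ‖x‖)) := by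
      calc δ * ‖(T ^ m * A⁻¹) *ᵥ x‖ ≤ κ * ‖(A⁻¹ * Th ^ m) *ᵥ x‖ := by linarith
        _ ≤ κ * (‖A⁻¹‖ * (‖(Th ^ m : Matrix (Fin n) (Fin n) ℝ)‖ * ‖x‖)) :=
            mul_le_mul_of_nonneg_left h4 hκ0
    calc ‖(T ^ m * A⁻¹) *ᵥ x‖ = δ⁻¹ * (δ * ‖(T ^ m * A⁻¹) *ᵥ x‖) := by
          rw [← mul_assoc, inv_mul_cancel₀ (ne_of_gt hδ), one_mul]
      _ ≤ δ⁻¹ * (κ * (‖A⁻¹‖ * (‖(Th ^ m : Matrix (Fin n) (Fin n) ℝ)‖ * ‖x‖))) :=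
          mul_le_mul_of_nonneg_left h5 (le_of_lt (inv_pos.2 hδ))
      _ = (δ⁻¹ * (κ * ‖A⁻¹‖) * ‖(Th ^ m : Matrix (Fin n) (Fin n) ℝ)‖) * ‖x‖ := by ring
  have hglobal : ∀ m : ℕ, ∀ y : Fin n → ℝ, ‖(T ^ m * A⁻¹) *ᵥ y‖
      ≤ k * (δ⁻¹ * (κ * ‖A⁻¹‖) * ‖(Th ^ m : Matrix (Fin n) (Fin n) ℝ)‖) * ‖y‖ := by
    intro m
    apply hkprop
    · positivity
    · exact hconebound m
  have hpowbound : ∀ m : ℕ, ∀ y : Fin n → ℝ, ‖(T ^ m) *ᵥ y‖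
      ≤ (k * (δ⁻¹ * (κ * ‖A⁻¹‖)) * ‖A‖ * ‖(Th ^ m : Matrix (Fin n) (Fin n) ℝ)‖) * ‖y‖ := by
    intro m y
    have heq : (T ^ m) *ᵥ y = (T ^ m * A⁻¹) *ᵥ (A *ᵥ y) := by
      rw [Matrix.mulVec_mulVec, Matrix.mul_assoc, hAinvA, Matrix.mul_one]
    rw [heq]
    calc ‖(T ^ m * A⁻¹) *ᵥ (A *ᵥ y)‖
        ≤ k * (δ⁻¹ * (κ * ‖A⁻¹‖) * ‖(Th ^ m : Matrix (Fin n) (Fin n) ℝ)‖) * ‖A *ᵥ y‖ :=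
          hglobal m (A *ᵥ y)
      _ ≤ k * (δ⁻¹ * (κ * ‖A⁻¹‖) * ‖(Th ^ m : Matrix (Fin n) (Fin n) ℝ)‖) * (‖A‖ * ‖y‖) := by
          apply mul_le_mul_of_nonneg_left (Matrix.linfty_opNorm_mulVec _ _)
          positivity
      _ = (k * (δ⁻¹ * (κ * ‖A⁻¹‖)) * ‖A‖ * ‖(Th ^ m : Matrix (Fin n) (Fin n) ℝ)‖) * ‖y‖ := by
          ring
  have hmatbound : ∀ m : ℕ, ‖(T ^ m : Matrix (Fin n) (Fin n) ℝ)‖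
      ≤ (n * (k * (δ⁻¹ * (κ * ‖A⁻¹‖)) * ‖A‖)) * ‖(Th ^ m : Matrix (Fin n) (Fin n) ℝ)‖ := by
    intro m
    calc ‖(T ^ m : Matrix (Fin n) (Fin n) ℝ)‖
        ≤ ∑ j, ‖(T ^ m) *ᵥ Pi.single j 1‖ := SpecRadAux.norm_le_sum_mulVec _
      _ ≤ ∑ j : Fin n, (k * (δ⁻¹ * (κ * ‖A⁻¹‖)) * ‖A‖
            * ‖(Th ^ m : Matrix (Fin n) (Fin n) ℝ)‖) * 1 := by
          apply Finset.sum_le_sum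
          intro j _
          have := hpowbound m (Pi.single j 1)
          rwa [Pi.norm_single, norm_one] at this
      _ = (n * (k * (δ⁻¹ * (κ * ‖A⁻¹‖)) * ‖A‖)) * ‖(Th ^ m : Matrix (Fin n) (Fin n) ℝ)‖ := by
          rw [Finset.sum_const, Finset.card_univ, Fintype.card_fin]
          push_cast
          ring
  have hcmp : specRad T ≤ specRad Th :=
    SpecRadAux.specRad_le_specRad hn _ hmatbound
  rw [hsim]
  exact ⟨hcmp, hlt1⟩
end

section
/- Let A = U − V be a convergent K-regular splitting of A ∈ ℝ^{n×n} and let U = F − G be a convergent K-weak regular splitting of type I. Then for every integer s ≥ 1, the two-stage iteration matrix T_s satisfies ρ(T_s) < 1. -/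
open Matrix Finset Filter

namespace TwoStageAux

open Matrix Finset Filter Topology
open scoped ENNReal NNReal

variable {n : ℕ}

/-! ### Cone basics -/

theorem K_zero {K : Set (Fin n → ℝ)} (hK : IsProperCone K) : (0 : Fin n → ℝ) ∈ K := by
  obtain ⟨w, hw⟩ := hK.2.2.2.2
  simpa using hK.2.2.1 0 le_rfl w (interior_subset hw)

theorem K_add {K : Set (Fin n → ℝ)} (hK : IsProperCone K) {x y : Fin n → ℝ}
    (hx : x ∈ K) (hy : y ∈ K) : x + y ∈ K := by
  have h := hK.2.1 hx hy (by norm_num : (0:ℝ) ≤ 1/2) (by norm_num : (0:ℝ) ≤ 1/2)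
    (by norm_num : (1/2 : ℝ) + 1/2 = 1)
  have h2 := hK.2.2.1 2 (by norm_num) _ h
  convert h2 using 1
  rw [smul_add, smul_smul, smul_smul]
  norm_num

theorem K_sum {K : Set (Fin n → ℝ)} (hK : IsProperCone K) {ι : Type*} (s : Finset ι)
    (f : ι → (Fin n → ℝ)) (h : ∀ i ∈ s, f i ∈ K) : ∑ i ∈ s, f i ∈ K := by
  classical
  induction s using Finset.induction_on with
  | empty => simpa using K_zero hK
  | insert _ _ hx ih =>
    rw [Finset.sum_insert hx]
    exact K_add hK (h _ (Finset.mem_insert_self _ _))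
      (ih fun i hi => h i (Finset.mem_insert_of_mem hi))

theorem KNonneg_mul {K : Set (Fin n → ℝ)} {M N : Matrix (Fin n) (Fin n) ℝ}
    (hM : KNonneg K M) (hN : KNonneg K N) : KNonneg K (M * N) := fun x hx => by
  rw [← Matrix.mulVec_mulVec]; exact hM _ (hN _ hx)

theorem KNonneg_pow {K : Set (Fin n → ℝ)} {M : Matrix (Fin n) (Fin n) ℝ}
    (hM : KNonneg K M) (k : ℕ) : KNonneg K (M ^ k) := by
  induction k with
  | zero => intro x hx; rw [pow_zero, Matrix.one_mulVec]; exact hx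
  | succ k ih => rw [pow_succ]; exact KNonneg_mul ih hM

theorem sum_mulVec' {ι : Type*} (s : Finset ι) (f : ι → Matrix (Fin n) (Fin n) ℝ)
    (x : Fin n → ℝ) : (∑ i ∈ s, f i) *ᵥ x = ∑ i ∈ s, (f i *ᵥ x) := by
  classical
  induction s using Finset.induction_on with
  | empty => simp [Matrix.zero_mulVec]
  | insert _ _ hx ih => rw [Finset.sum_insert hx, Finset.sum_insert hx, Matrix.add_mulVec, ih]

/-! ### Spectral radius basics -/

theorem mapC_pow (M : Matrix (Fin n) (Fin n) ℝ) (k : ℕ) :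
    (M ^ k).map Complex.ofReal = (M.map Complex.ofReal) ^ k := by
  have h : ∀ A : Matrix (Fin n) (Fin n) ℝ, A.map Complex.ofReal = A.map ⇑Complex.ofRealHom :=
    fun _ => rfl
  induction k with
  | zero => rw [pow_zero, pow_zero, Matrix.map_one _ Complex.ofReal_zero Complex.ofReal_one]
  | succ k ih =>
    have h2 : ((M ^ k * M).map ⇑Complex.ofRealHom)
        = (M ^ k).map ⇑Complex.ofRealHom * M.map ⇑Complex.ofRealHom := Matrix.map_mul
    rw [pow_succ, pow_succ, ← ih]
    exact h2

theorem abs_le_specRad {M : Matrix (Fin n) (Fin n) ℝ} {μ : ℂ}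
    (hμ : μ ∈ spectrum ℂ (M.map Complex.ofReal)) : ‖μ‖ ≤ specRad M :=
  le_csSup (((M.map Complex.ofReal).finite_spectrum).image _).bddAbove ⟨μ, hμ, rfl⟩

theorem specRad_lt_one {M : Matrix (Fin n) (Fin n) ℝ}
    (h : ∀ μ ∈ spectrum ℂ (M.map Complex.ofReal), ‖μ‖ < 1) : specRad M < 1 := by
  rcases (spectrum ℂ (M.map Complex.ofReal)).eq_empty_or_nonempty with he | hne
  · unfold specRad; rw [he]; simpa using one_pos
  · unfold specRad
    have hfin := ((M.map Complex.ofReal).finite_spectrum).image (fun z : ℂ => ‖z‖)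
    obtain ⟨μ, hμ, heq⟩ := (hne.image (fun z : ℂ => ‖z‖)).csSup_mem hfin
    rw [← heq]; exact h μ hμ

theorem exists_eigenvector {M : Matrix (Fin n) (Fin n) ℂ} {μ : ℂ} (hμ : μ ∈ spectrum ℂ M) :
    ∃ z : Fin n → ℂ, z ≠ 0 ∧ M *ᵥ z = μ • z := by
  rw [← AlgEquiv.spectrum_eq (Matrix.toLinAlgEquiv' : Matrix (Fin n) (Fin n) ℂ ≃ₐ[ℂ] _) M] at hμ
  obtain ⟨v, hv⟩ :=
    (Module.End.hasEigenvalue_iff_mem_spectrum.mpr hμ).exists_hasEigenvector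
  exact ⟨v, hv.right, by rw [← Matrix.toLinAlgEquiv'_apply]; exact hv.apply_eq_smul⟩

/-! ### Gelfand formula consequences -/

section Gelfand

attribute [local instance] Matrix.linftyOpNormedRing Matrix.linftyOpNormedAlgebra
  Matrix.linftyOpNormedSpace

theorem entry_norm_le (A : Matrix (Fin n) (Fin n) ℂ) (i j : Fin n) : ‖A i j‖ ≤ ‖A‖ := by
  have h : ‖A i j‖₊ ≤ ‖A‖₊ := by
    rw [Matrix.linfty_opNNNorm_def]
    exact le_trans
      (Finset.single_le_sum (f := fun j' => ‖A i j'‖₊) (fun _ _ => by positivity) (Finset.mem_univ j))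
      (Finset.le_sup (f := fun i => ∑ j, ‖A i j‖₊) (Finset.mem_univ i))
  exact_mod_cast h

theorem pow_entry_bound {M : Matrix (Fin n) (Fin n) ℝ} (h : specRad M < 1) :
    ∃ C r : ℝ, 0 < C ∧ 0 < r ∧ r < 1 ∧ ∀ k (i j : Fin n), |(M ^ k) i j| ≤ C * r ^ k := by
  set Mc := M.map Complex.ofReal with hMc
  have hsr : spectralRadius ℂ Mc < 1 := by
    refine lt_of_le_of_lt ?_ (ENNReal.ofReal_lt_one.mpr h)
    rw [spectralRadius]
    refine iSup₂_le fun μ hμ => ?_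
    rw [← enorm_eq_nnnorm, ← ofReal_norm]
    refine ENNReal.ofReal_le_ofReal ?_
    exact abs_le_specRad hμ
  obtain ⟨r0, hr00, hlt, hlt1⟩ := ENNReal.lt_iff_exists_real_btwn.mp hsr
  set r := max r0 (1/2) with hr
  have hr0 : (0:ℝ) < r := lt_of_lt_of_le (by norm_num) (le_max_right _ _)
  have hr1 : r < 1 := by
    apply max_lt _ (by norm_num)
    by_contra hcon
    push_neg at hcon
    have : (1 : ℝ≥0∞) ≤ ENNReal.ofReal r0 := by
      rw [show (1 : ℝ≥0∞) = ENNReal.ofReal 1 by simp]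
      exact ENNReal.ofReal_le_ofReal hcon
    exact absurd hlt1 (not_lt.mpr this)
  have hlt' : spectralRadius ℂ Mc < ENNReal.ofReal r :=
    lt_of_lt_of_le hlt (ENNReal.ofReal_le_ofReal (le_max_left _ _))
  have hev := (spectrum.pow_nnnorm_pow_one_div_tendsto_nhds_spectralRadius Mc).eventually_lt_const hlt'
  obtain ⟨N, hN⟩ := eventually_atTop.mp hev
  set N1 := max N 1 with hN1
  have key : ∀ k, N1 ≤ k → ‖Mc ^ k‖ ≤ r ^ k := by
    intro k hk
    have hk1 : 1 ≤ k := le_trans (le_max_right _ _) hk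
    have h1 := hN k (le_trans (le_max_left _ _) hk)
    have hkpos : (0:ℝ) < k := by exact_mod_cast hk1
    have h2 := ENNReal.rpow_lt_rpow h1 hkpos
    rw [← ENNReal.rpow_mul, one_div, inv_mul_cancel₀ (ne_of_gt hkpos), ENNReal.rpow_one] at h2
    have h3 : (ENNReal.ofReal r) ^ ((k:ℕ):ℝ) = ENNReal.ofReal (r ^ k) := by
      rw [ENNReal.rpow_natCast, ← ENNReal.ofReal_pow hr0.le]
    rw [h3] at h2
    rw [← enorm_eq_nnnorm, ← ofReal_norm] at h2
    exact le_of_lt ((ENNReal.ofReal_lt_ofReal_iff_of_nonneg (norm_nonneg _)).mp h2)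
  set C := (∑ k ∈ Finset.range N1, ‖Mc ^ k‖ / r ^ k) + 1 with hC
  have hsum_nonneg : (0:ℝ) ≤ ∑ k ∈ Finset.range N1, ‖Mc ^ k‖ / r ^ k :=
    Finset.sum_nonneg fun k _ => by positivity
  have hC1 : (1:ℝ) ≤ C := by rw [hC]; linarith
  have hCpos : (0:ℝ) < C := by linarith
  refine ⟨C, r, hCpos, hr0, hr1, fun k i j => ?_⟩
  have hentry : |(M ^ k) i j| ≤ ‖Mc ^ k‖ := by
    have he : (Mc ^ k) i j = Complex.ofReal ((M ^ k) i j) := by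
      rw [hMc, ← mapC_pow]; rfl
    calc |(M ^ k) i j| = ‖(Mc ^ k) i j‖ := by rw [he, Complex.norm_real, Real.norm_eq_abs]
    _ ≤ ‖Mc ^ k‖ := entry_norm_le _ i j
  have hrk : (0:ℝ) < r ^ k := by positivity
  rcases lt_or_ge k N1 with hk | hk
  · have h1 : ‖Mc ^ k‖ / r ^ k ≤ ∑ m ∈ Finset.range N1, ‖Mc ^ m‖ / r ^ m :=
      Finset.single_le_sum (f := fun m => ‖Mc ^ m‖ / r ^ m) (fun m _ => by positivity)
        (Finset.mem_range.mpr hk)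
    have hterm : ‖Mc ^ k‖ / r ^ k ≤ C := by rw [hC]; linarith
    have := (div_le_iff₀ hrk).mp hterm
    linarith
  · have h1 := key k hk
    nlinarith [hentry, le_of_lt hrk]

end Gelfand

theorem pow_mulVec_tendsto {M : Matrix (Fin n) (Fin n) ℝ} (h : specRad M < 1)
    (v : Fin n → ℝ) : Tendsto (fun k => (M ^ k) *ᵥ v) atTop (𝓝 0) := by
  obtain ⟨C, r, hC, hr0, hr1, hb⟩ := pow_entry_bound h
  rw [tendsto_pi_nhds]
  intro i
  have hbd : ∀ k, |((M ^ k) *ᵥ v) i| ≤ (C * ∑ j, |v j|) * r ^ k := by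
    intro k
    calc |((M ^ k) *ᵥ v) i| = |∑ j, (M ^ k) i j * v j| := rfl
    _ ≤ ∑ j, |(M ^ k) i j * v j| := Finset.abs_sum_le_sum_abs _ _
    _ ≤ ∑ j, (C * r ^ k) * |v j| := Finset.sum_le_sum fun j _ => by
        rw [abs_mul]; exact mul_le_mul_of_nonneg_right (hb k i j) (abs_nonneg _)
    _ = (C * ∑ j, |v j|) * r ^ k := by rw [← Finset.mul_sum]; ring
  have hg : Tendsto (fun k => (C * ∑ j, |v j|) * r ^ k) atTop (𝓝 0) := by
    simpa using (tendsto_pow_atTop_nhds_zero_of_lt_one hr0.le hr1).const_mul (C * ∑ j, |v j|)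
  simpa using squeeze_zero_norm hbd hg

theorem isUnit_one_sub {M : Matrix (Fin n) (Fin n) ℝ}
    (htend : ∀ v : Fin n → ℝ, Tendsto (fun k => (M ^ k) *ᵥ v) atTop (𝓝 0)) :
    IsUnit ((1 : Matrix (Fin n) (Fin n) ℝ) - M) := by
  rw [Matrix.isUnit_iff_isUnit_det, isUnit_iff_ne_zero]
  intro hdet
  obtain ⟨z, hz0, hz⟩ := Matrix.exists_mulVec_eq_zero_iff.mpr hdet
  have hMz : M *ᵥ z = z := by
    rw [Matrix.sub_mulVec, Matrix.one_mulVec, sub_eq_zero] at hz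
    exact hz.symm
  have hpow : ∀ k, (M ^ k) *ᵥ z = z := by
    intro k
    induction k with
    | zero => rw [pow_zero, Matrix.one_mulVec]
    | succ k ih => rw [pow_succ', ← Matrix.mulVec_mulVec, ih, hMz]
  have h2 := htend z
  simp only [hpow] at h2
  exact hz0 (tendsto_nhds_unique tendsto_const_nhds h2)

theorem KNonneg_inv_one_sub {K : Set (Fin n → ℝ)} (hK : IsProperCone K)
    {M : Matrix (Fin n) (Fin n) ℝ} (hM : KNonneg K M)
    (htend : ∀ v : Fin n → ℝ, Tendsto (fun k => (M ^ k) *ᵥ v) atTop (𝓝 0)) :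
    KNonneg K (1 - M)⁻¹ := by
  have hu : IsUnit ((1 : Matrix (Fin n) (Fin n) ℝ) - M) := isUnit_one_sub htend
  have hdet := (Matrix.isUnit_iff_isUnit_det _).mp hu
  intro x hx
  set y := (1 - M)⁻¹ *ᵥ x with hy
  have hxy : ((1 : Matrix (Fin n) (Fin n) ℝ) - M) *ᵥ y = x := by
    rw [hy, Matrix.mulVec_mulVec, Matrix.mul_nonsing_inv _ hdet, Matrix.one_mulVec]
  have hiter : ∀ m, (∑ k ∈ Finset.range m, M ^ k) *ᵥ x = y - (M ^ m) *ᵥ y := by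
    intro m
    have h1 : (∑ k ∈ Finset.range m, M ^ k) * (1 - M) = 1 - M ^ m := by
      have h2 := geom_sum_mul M m
      have h3 : (∑ k ∈ Finset.range m, M ^ k) * (1 - M)
          = -((∑ k ∈ Finset.range m, M ^ k) * (M - 1)) := by rw [← mul_neg, neg_sub]
      rw [h3, h2, neg_sub]
    rw [← hxy, Matrix.mulVec_mulVec, h1, Matrix.sub_mulVec, Matrix.one_mulVec]
  have hmem : ∀ m, y - (M ^ m) *ᵥ y ∈ K := by
    intro m
    rw [← hiter, sum_mulVec']
    exact K_sum hK _ _ fun k _ => KNonneg_pow hM k x hx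
  have hlim : Tendsto (fun m => y - (M ^ m) *ᵥ y) atTop (𝓝 y) := by
    simpa using tendsto_const_nhds.sub (htend y)
  exact hK.1.mem_of_tendsto hlim (Filter.Eventually.of_forall hmem)

theorem mulVec_mem_interior {K : Set (Fin n → ℝ)} (hK : IsProperCone K)
    {M : Matrix (Fin n) (Fin n) ℝ} (hM : KNonneg K M) (hu : IsUnit M)
    {x : Fin n → ℝ} (hx : x ∈ interior K) : M *ᵥ x ∈ interior K := by
  have hdet := (Matrix.isUnit_iff_isUnit_det _).mp hu
  have hcont : Continuous fun v : Fin n → ℝ => M⁻¹ *ᵥ v := by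
    have h := (Matrix.mulVecLin M⁻¹).continuous_of_finiteDimensional
    exact h
  rw [mem_interior]
  refine ⟨(fun v => M⁻¹ *ᵥ v) ⁻¹' interior K, ?_, isOpen_interior.preimage hcont, ?_⟩
  · intro v hv
    have h1 : M⁻¹ *ᵥ v ∈ K := interior_subset hv
    have h2 : M *ᵥ (M⁻¹ *ᵥ v) = v := by
      rw [Matrix.mulVec_mulVec, Matrix.mul_nonsing_inv _ hdet, Matrix.one_mulVec]
    rw [← h2]
    exact hM _ h1
  · show M⁻¹ *ᵥ (M *ᵥ x) ∈ interior K
    rw [Matrix.mulVec_mulVec, Matrix.nonsing_inv_mul _ hdet, Matrix.one_mulVec]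
    exact hx

theorem bounded_interval {K : Set (Fin n → ℝ)} (hK : IsProperCone K) (u : Fin n → ℝ) :
    ∃ B : ℝ, 0 < B ∧ ∀ v : Fin n → ℝ, u - v ∈ K → u + v ∈ K → ‖v‖ ≤ B := by
  by_contra hcon
  push_neg at hcon
  have hex : ∀ m : ℕ, ∃ v : Fin n → ℝ, (u - v ∈ K) ∧ (u + v ∈ K) ∧ (m + 1 : ℝ) < ‖v‖ := by
    intro m
    obtain ⟨v, h1, h2, h3⟩ := hcon (m + 1) (by positivity)
    exact ⟨v, h1, h2, h3⟩
  choose v hv1 hv2 hv3 using hex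
  have hnorm : ∀ m, 0 < ‖v m‖ := fun m => lt_trans (by positivity) (hv3 m)
  set w := fun m => ‖v m‖⁻¹ • v m with hw
  have hwmem : ∀ m, w m ∈ Metric.sphere (0 : Fin n → ℝ) 1 := by
    intro m
    simp only [hw, Metric.mem_sphere, dist_zero_right, norm_smul, Real.norm_eq_abs,
      abs_of_pos (inv_pos.mpr (hnorm m))]
    rw [inv_mul_cancel₀ (hnorm m).ne']
  obtain ⟨a, ha, φ, hφ, hconv⟩ := (isCompact_sphere (0 : Fin n → ℝ) 1).tendsto_subseq hwmem
  have hsc : ∀ m, ‖v m‖⁻¹ • u - w m ∈ K := by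
    intro m
    have h1 := hK.2.2.1 ‖v m‖⁻¹ (inv_pos.mpr (hnorm m)).le _ (hv1 m)
    rwa [smul_sub] at h1
  have hsc2 : ∀ m, ‖v m‖⁻¹ • u + w m ∈ K := by
    intro m
    have h1 := hK.2.2.1 ‖v m‖⁻¹ (inv_pos.mpr (hnorm m)).le _ (hv2 m)
    rwa [smul_add] at h1
  have hbig : ∀ m : ℕ, (m + 1 : ℝ) ≤ ‖v (φ m)‖ := by
    intro m
    have h1 : (m : ℝ) ≤ (φ m : ℝ) := by exact_mod_cast hφ.le_apply
    have h2 := hv3 (φ m)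
    linarith
  have hinv0 : Tendsto (fun m => ‖v (φ m)‖⁻¹) atTop (𝓝 0) := by
    apply squeeze_zero (fun m => (inv_pos.mpr (hnorm _)).le) (fun m => ?_)
      tendsto_one_div_add_atTop_nhds_zero_nat
    rw [one_div]
    exact inv_anti₀ (by positivity) (hbig m)
  have htend0 : Tendsto (fun m => ‖v (φ m)‖⁻¹ • u) atTop (𝓝 0) := by
    simpa using hinv0.smul_const u
  have hseq1 : Tendsto (fun m => ‖v (φ m)‖⁻¹ • u - w (φ m)) atTop (𝓝 (-a)) := by
    simpa using htend0.sub hconv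
  have hseq2 : Tendsto (fun m => ‖v (φ m)‖⁻¹ • u + w (φ m)) atTop (𝓝 a) := by
    simpa using htend0.add hconv
  have hna : -a ∈ K :=
    hK.1.mem_of_tendsto hseq1 (Filter.Eventually.of_forall fun m => hsc (φ m))
  have hpa : a ∈ K :=
    hK.1.mem_of_tendsto hseq2 (Filter.Eventually.of_forall fun m => hsc2 (φ m))
  have ha0 : a = 0 := by
    have hmem2 : a ∈ K ∩ (-K) := ⟨hpa, by rw [Set.mem_neg]; exact hna⟩
    rw [hK.2.2.2.1] at hmem2
    exact hmem2
  rw [ha0] at ha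
  simp at ha

theorem exists_scale {K : Set (Fin n → ℝ)} (hK : IsProperCone K) {u : Fin n → ℝ}
    (hu : u ∈ interior K) (v : Fin n → ℝ) :
    ∃ c : ℝ, 0 < c ∧ c • u - v ∈ K ∧ c • u + v ∈ K := by
  obtain ⟨ε, hε, hball⟩ := Metric.isOpen_iff.mp isOpen_interior u hu
  set δ := ε / (2 * (‖v‖ + 1)) with hδ
  have hδpos : 0 < δ := by positivity
  have hkey : ∀ t : Fin n → ℝ, t = δ • v ∨ t = -(δ • v) → u + t ∈ K := by
    intro t ht
    apply interior_subset; apply hball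
    rw [Metric.mem_ball, dist_eq_norm]
    have hnt : ‖t‖ = δ * ‖v‖ := by
      rcases ht with rfl | rfl
      · rw [norm_smul, Real.norm_eq_abs, abs_of_pos hδpos]
      · rw [norm_neg, norm_smul, Real.norm_eq_abs, abs_of_pos hδpos]
    have h2 : u + t - u = t := by abel
    rw [h2, hnt]
    have h4 : δ * ‖v‖ ≤ δ * (‖v‖ + 1) := by
      apply mul_le_mul_of_nonneg_left (by linarith) hδpos.le
    have h5 : δ * (‖v‖ + 1) = ε / 2 := by
      rw [hδ]; field_simp
    linarith
  have h1 : u + δ • v ∈ K := hkey _ (Or.inl rfl)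
  have h2 : u - δ • v ∈ K := by
    have := hkey _ (Or.inr rfl)
    rwa [← sub_eq_add_neg] at this
  refine ⟨δ⁻¹, by positivity, ?_, ?_⟩
  · have h3 := hK.2.2.1 δ⁻¹ (by positivity) _ h2
    rwa [smul_sub, smul_smul, inv_mul_cancel₀ hδpos.ne', one_smul] at h3
  · have h3 := hK.2.2.1 δ⁻¹ (by positivity) _ h1
    rwa [smul_add, smul_smul, inv_mul_cancel₀ hδpos.ne', one_smul] at h3

theorem specRad_lt_one_of_contraction {K : Set (Fin n → ℝ)} (hK : IsProperCone K)
    {T : Matrix (Fin n) (Fin n) ℝ} {u : Fin n → ℝ} {l : ℝ}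
    (hT : KNonneg K T) (hu : u ∈ interior K) (hl0 : 0 < l) (hl1 : l < 1)
    (hstep : l • u - T *ᵥ u ∈ K) : specRad T < 1 := by
  apply specRad_lt_one
  intro μ hμ
  obtain ⟨z, hz0, hz⟩ := exists_eigenvector hμ
  set x : Fin n → ℝ := fun i => (z i).re with hx
  set y : Fin n → ℝ := fun i => (z i).im with hy
  obtain ⟨B, hB, hbd⟩ := bounded_interval hK u
  have aux : ∀ (v : Fin n → ℝ) (c : ℝ), 0 < c → c • u - v ∈ K → c • u + v ∈ K →
      ∀ k, (c * l ^ k) • u - (T ^ k) *ᵥ v ∈ K ∧ (c * l ^ k) • u + (T ^ k) *ᵥ v ∈ K := by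
    intro v c hc h1 h2 k
    induction k with
    | zero =>
      constructor
      · rw [pow_zero, mul_one, pow_zero, Matrix.one_mulVec]; exact h1
      · rw [pow_zero, mul_one, pow_zero, Matrix.one_mulVec]; exact h2
    | succ k ih =>
      obtain ⟨ih1, ih2⟩ := ih
      have hcl : (0:ℝ) ≤ c * l ^ k := by positivity
      have hscal : c * l ^ k * l = c * l ^ (k + 1) := by rw [pow_succ]; ring
      constructor
      · have m1 := K_add hK (hT _ ih1) (hK.2.2.1 _ hcl _ hstep)
        have e1 : T *ᵥ ((c * l ^ k) • u - (T ^ k) *ᵥ v) + (c * l ^ k) • (l • u - T *ᵥ u)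
            = (c * l ^ (k + 1)) • u - (T ^ (k + 1)) *ᵥ v := by
          rw [Matrix.mulVec_sub, Matrix.mulVec_smul, pow_succ' T k, ← Matrix.mulVec_mulVec,
            smul_sub, smul_smul, hscal]
          abel
        rwa [e1] at m1
      · have m1 := K_add hK (hT _ ih2) (hK.2.2.1 _ hcl _ hstep)
        have e1 : T *ᵥ ((c * l ^ k) • u + (T ^ k) *ᵥ v) + (c * l ^ k) • (l • u - T *ᵥ u)
            = (c * l ^ (k + 1)) • u + (T ^ (k + 1)) *ᵥ v := by
          rw [Matrix.mulVec_add, Matrix.mulVec_smul, pow_succ' T k, ← Matrix.mulVec_mulVec,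
            smul_sub, smul_smul, hscal]
          abel
        rwa [e1] at m1
  have bound : ∀ v : Fin n → ℝ, ∃ c : ℝ, 0 < c ∧ ∀ k, ‖(T ^ k) *ᵥ v‖ ≤ (c * B) * l ^ k := by
    intro v
    obtain ⟨c, hc, h1, h2⟩ := exists_scale hK hu v
    refine ⟨c, hc, fun k => ?_⟩
    obtain ⟨g1, g2⟩ := aux v c hc h1 h2 k
    have hpos : (0:ℝ) < c * l ^ k := by positivity
    have s1 := hK.2.2.1 (c * l ^ k)⁻¹ (by positivity) _ g1
    have s2 := hK.2.2.1 (c * l ^ k)⁻¹ (by positivity) _ g2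
    rw [smul_sub, smul_smul, inv_mul_cancel₀ hpos.ne', one_smul] at s1
    rw [smul_add, smul_smul, inv_mul_cancel₀ hpos.ne', one_smul] at s2
    have h3 := hbd _ s1 s2
    rw [norm_smul, Real.norm_eq_abs, abs_of_pos (inv_pos.mpr hpos)] at h3
    calc ‖(T ^ k) *ᵥ v‖ = (c * l ^ k) * ((c * l ^ k)⁻¹ * ‖(T ^ k) *ᵥ v‖) := by
          field_simp
    _ ≤ (c * l ^ k) * B := mul_le_mul_of_nonneg_left h3 hpos.le
    _ = (c * B) * l ^ k := by ring
  obtain ⟨cx, hcx, hxb⟩ := bound x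
  obtain ⟨cy, hcy, hyb⟩ := bound y
  have htx : Tendsto (fun k => (T ^ k) *ᵥ x) atTop (𝓝 0) :=
    squeeze_zero_norm hxb
      (by simpa using (tendsto_pow_atTop_nhds_zero_of_lt_one hl0.le hl1).const_mul (cx * B))
  have hty : Tendsto (fun k => (T ^ k) *ᵥ y) atTop (𝓝 0) :=
    squeeze_zero_norm hyb
      (by simpa using (tendsto_pow_atTop_nhds_zero_of_lt_one hl0.le hl1).const_mul (cy * B))
  set Tc := T.map Complex.ofReal with hTc
  have hdec : ∀ k, (Tc ^ k) *ᵥ z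
      = fun i => ((((T ^ k) *ᵥ x) i : ℝ) : ℂ) + ((((T ^ k) *ᵥ y) i : ℝ) : ℂ) * Complex.I := by
    intro k
    induction k with
    | zero =>
      funext i
      simp only [pow_zero, Matrix.one_mulVec]
      exact (Complex.re_add_im (z i)).symm
    | succ k ih =>
      funext i
      rw [pow_succ' Tc k, ← Matrix.mulVec_mulVec, ih, pow_succ' T k, ← Matrix.mulVec_mulVec,
        ← Matrix.mulVec_mulVec]
      show (∑ j, Tc i j * (((((T ^ k) *ᵥ x) j : ℝ) : ℂ) + ((((T ^ k) *ᵥ y) j : ℝ) : ℂ) * Complex.I))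
        = ((∑ j, T i j * ((T ^ k) *ᵥ x) j : ℝ) : ℂ) + ((∑ j, T i j * ((T ^ k) *ᵥ y) j : ℝ) : ℂ) * Complex.I
      push_cast
      rw [Finset.sum_mul, ← Finset.sum_add_distrib]
      refine Finset.sum_congr rfl fun j _ => ?_
      rw [hTc]
      show ((T i j : ℝ) : ℂ) * _ = _
      ring
  have heig : ∀ k, (Tc ^ k) *ᵥ z = (μ ^ k) • z := by
    intro k
    induction k with
    | zero => simp [Matrix.one_mulVec]
    | succ k ih =>
      rw [pow_succ' Tc k, ← Matrix.mulVec_mulVec, ih, Matrix.mulVec_smul, hz, smul_smul,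
        ← pow_succ]
  obtain ⟨i, hi⟩ : ∃ i, z i ≠ 0 := by
    by_contra hcn
    push_neg at hcn
    exact hz0 (funext hcn)
  have hcomp : Tendsto (fun k => μ ^ k * z i) atTop (𝓝 0) := by
    have h1 : ∀ k, μ ^ k * z i
        = ((((T ^ k) *ᵥ x) i : ℝ) : ℂ) + ((((T ^ k) *ᵥ y) i : ℝ) : ℂ) * Complex.I := by
      intro k
      calc μ ^ k * z i = ((μ ^ k) • z) i := rfl
      _ = ((Tc ^ k) *ᵥ z) i := by rw [heig k]
      _ = _ := by rw [hdec k]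
    simp only [h1]
    have t1 : Tendsto (fun k => ((((T ^ k) *ᵥ x) i : ℝ) : ℂ)) atTop (𝓝 0) := by
      have h2 := (tendsto_pi_nhds.mp htx) i
      have h3 := (Complex.continuous_ofReal.tendsto 0).comp (by simpa using h2)
      simpa [Function.comp_def] using h3
    have t2 : Tendsto (fun k => ((((T ^ k) *ᵥ y) i : ℝ) : ℂ)) atTop (𝓝 0) := by
      have h2 := (tendsto_pi_nhds.mp hty) i
      have h3 := (Complex.continuous_ofReal.tendsto 0).comp (by simpa using h2)
      simpa [Function.comp_def] using h3
    simpa using t1.add (t2.mul_const Complex.I)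
  by_contra hge
  push_neg at hge
  have h2 := hcomp.norm
  rw [norm_zero] at h2
  obtain ⟨k, hk⟩ := (h2.eventually_lt_const (show (0:ℝ) < ‖z i‖ from norm_pos_iff.mpr hi)).exists
  have h4 : ‖z i‖ ≤ ‖μ ^ k * z i‖ := by
    rw [norm_mul, norm_pow]
    have h5 : (1:ℝ) ≤ ‖μ‖ ^ k := one_le_pow₀ (by exact hge)
    nlinarith [norm_nonneg (z i)]
  linarith

end TwoStageAux

theorem stmt_3 {n : ℕ} (K : Set (Fin n → ℝ)) (hK : IsProperCone K)
    (A U V F G : Matrix (Fin n) (Fin n) ℝ)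
    (houter : KRegularSplitting K A U V) (houterconv : specRad (U⁻¹ * V) < 1)
    (hinner : KWeakRegularSplittingI K U F G) (hinnerconv : specRad (F⁻¹ * G) < 1) :
    ∀ s : ℕ, 1 ≤ s → specRad (twoStageT F G V s) < 1 := by
  classical
  obtain ⟨hA, hU, hUinv, hV⟩ := houter
  obtain ⟨hUFG, hF, hFinv, hHnn⟩ := hinner
  intro s hs
  simp only [twoStageT]
  have hUdet := (Matrix.isUnit_iff_isUnit_det U).mp hU
  have hFdet := (Matrix.isUnit_iff_isUnit_det F).mp hF
  set H := F⁻¹ * G with hHdef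
  set P := U⁻¹ * V with hPdef
  have hPnn : KNonneg K P := fun x hx => by
    rw [hPdef, ← Matrix.mulVec_mulVec]; exact hUinv _ (hV _ hx)
  have htendP := TwoStageAux.pow_mulVec_tendsto houterconv
  have htendH := TwoStageAux.pow_mulVec_tendsto hinnerconv
  have htendHs : ∀ v : Fin n → ℝ, Tendsto (fun k => ((H ^ s) ^ k) *ᵥ v) atTop (nhds 0) := by
    intro v
    have hmono : Tendsto (fun k : ℕ => s * k) atTop atTop :=
      Filter.tendsto_atTop_mono (fun k => Nat.le_mul_of_pos_left k (by omega)) tendsto_id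
    have h1 := (htendH v).comp hmono
    simpa [Function.comp_def, pow_mul] using h1
  have hIP : IsUnit ((1 : Matrix (Fin n) (Fin n) ℝ) - P) := TwoStageAux.isUnit_one_sub htendP
  have hIHs : IsUnit ((1 : Matrix (Fin n) (Fin n) ℝ) - H ^ s) := TwoStageAux.isUnit_one_sub htendHs
  have hinvP : KNonneg K (1 - P)⁻¹ := TwoStageAux.KNonneg_inv_one_sub hK hPnn htendP
  have hHs : KNonneg K (H ^ s) := TwoStageAux.KNonneg_pow hHnn s
  have hinvHs : KNonneg K (1 - H ^ s)⁻¹ := TwoStageAux.KNonneg_inv_one_sub hK hHs htendHs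
  set S := ∑ j ∈ Finset.range s, H ^ j with hS
  set Qs := S * F⁻¹ with hQs
  have hFU : F⁻¹ * U = 1 - H := by
    rw [hUFG, Matrix.mul_sub, Matrix.nonsing_inv_mul _ hFdet]
  have hgeom : S * (1 - H) = 1 - H ^ s := by
    have h2 := geom_sum_mul H s
    calc S * (1 - H) = -(S * (H - 1)) := by rw [← mul_neg, neg_sub]
    _ = -(H ^ s - 1) := by rw [hS, h2]
    _ = 1 - H ^ s := neg_sub _ _
  have hQsU : Qs * U = 1 - H ^ s := by rw [hQs, mul_assoc, hFU, hgeom]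
  have hAform : A = U * (1 - P) := by
    rw [hA, mul_sub, mul_one, hPdef, ← mul_assoc, Matrix.mul_nonsing_inv _ hUdet, one_mul]
  set Ts := H ^ s + S * (F⁻¹ * V) with hTs
  have hTeq : Ts = 1 - Qs * A := by
    rw [hTs, hA, mul_sub Qs U V, hQsU, hQs, mul_assoc S F⁻¹ V]
    abel
  have hTnn : KNonneg K Ts := by
    intro q hq
    rw [hTs, Matrix.add_mulVec]
    apply TwoStageAux.K_add hK (hHs q hq)
    rw [← Matrix.mulVec_mulVec]
    have h1 : (F⁻¹ * V) *ᵥ q ∈ K := by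
      rw [← Matrix.mulVec_mulVec]; exact hFinv _ (hV _ hq)
    rw [hS, TwoStageAux.sum_mulVec']
    exact TwoStageAux.K_sum hK _ _ fun j _ => TwoStageAux.KNonneg_pow hHnn j _ h1
  set R := (1 - P)⁻¹ * (1 - H ^ s)⁻¹ with hR
  have hRnn : KNonneg K R := fun q hq => by
    rw [hR, ← Matrix.mulVec_mulVec]; exact hinvP _ (hinvHs _ hq)
  have hIPdet := (Matrix.isUnit_iff_isUnit_det _).mp hIP
  have hIHsdet := (Matrix.isUnit_iff_isUnit_det _).mp hIHs
  have hRunit : IsUnit R := by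
    rw [Matrix.isUnit_iff_isUnit_det, hR, Matrix.det_mul]
    exact (Matrix.isUnit_nonsing_inv_det _ hIPdet).mul (Matrix.isUnit_nonsing_inv_det _ hIHsdet)
  have hTR : (1 - Ts) * R = 1 := by
    rw [hTeq, sub_sub_cancel, hAform, hR]
    calc Qs * (U * (1 - P)) * ((1 - P)⁻¹ * (1 - H ^ s)⁻¹)
        = Qs * U * ((1 - P) * (1 - P)⁻¹) * (1 - H ^ s)⁻¹ := by noncomm_ring
    _ = (1 - H ^ s) * (1 - H ^ s)⁻¹ := by
        rw [Matrix.mul_nonsing_inv _ hIPdet, mul_one, hQsU]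
    _ = 1 := Matrix.mul_nonsing_inv _ hIHsdet
  obtain ⟨w, hw⟩ := hK.2.2.2.2
  set u := R *ᵥ w with hu
  have huint : u ∈ interior K := TwoStageAux.mulVec_mem_interior hK hRnn hRunit hw
  have hTu : u - Ts *ᵥ u = w := by
    calc u - Ts *ᵥ u = (1 - Ts) *ᵥ u := by rw [Matrix.sub_mulVec, Matrix.one_mulVec]
    _ = ((1 - Ts) * R) *ᵥ w := by rw [hu, Matrix.mulVec_mulVec]
    _ = w := by rw [hTR, Matrix.one_mulVec]
  obtain ⟨ε, hε, hball⟩ := Metric.isOpen_iff.mp isOpen_interior w hw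
  set δ := min (1/2 : ℝ) (ε / (2 * (‖u‖ + 1))) with hδ
  have hδ0 : 0 < δ := lt_min (by norm_num) (by positivity)
  have hδhalf : δ ≤ 1/2 := min_le_left _ _
  have hstep : (1 - δ) • u - Ts *ᵥ u ∈ K := by
    have h1 : (1 - δ) • u - Ts *ᵥ u = w - δ • u := by
      rw [sub_smul, one_smul, ← hTu]; abel
    rw [h1]
    apply interior_subset; apply hball
    rw [Metric.mem_ball, dist_eq_norm]
    have h2 : w - δ • u - w = -(δ • u) := by abel
    rw [h2, norm_neg, norm_smul, Real.norm_eq_abs, abs_of_pos hδ0]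
    have h3 : δ ≤ ε / (2 * (‖u‖ + 1)) := min_le_right _ _
    have h4 : δ * ‖u‖ ≤ (ε / (2 * (‖u‖ + 1))) * (‖u‖ + 1) :=
      mul_le_mul h3 (by linarith [norm_nonneg u]) (norm_nonneg u) (by positivity)
    have h5 : (ε / (2 * (‖u‖ + 1))) * (‖u‖ + 1) = ε / 2 := by field_simp
    linarith
  exact TwoStageAux.specRad_lt_one_of_contraction hK hTnn huint (by linarith) (by linarith) hstep
end

section
/- Let A, U, F ∈ ℝ^{n×n} be invertible with A = U − V and U = F − G. If V F⁻¹ G = G F⁻¹ V, then for every integer s ≥ 1 one has T̂_s = A T_s A⁻¹ (the matrices T_s and T̂_s are similar), and consequently ρ(T̂_s) = ρ(T_s). -/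
open Matrix Finset Filter

lemma conj_pow_aux {n : ℕ} (M H Hh : Matrix (Fin n) (Fin n) ℝ)
    (h : M * H = Hh * M) : ∀ j : ℕ, M * H ^ j = Hh ^ j * M := by
  intro j
  induction j with
  | zero => simp
  | succ k ih =>
    rw [pow_succ, pow_succ, ← mul_assoc, ih, mul_assoc, mul_assoc, h, ← mul_assoc]

lemma specRad_conj {n : ℕ} (A T : Matrix (Fin n) (Fin n) ℝ) (hA : IsUnit A) :
    specRad (A * T * A⁻¹) = specRad T := by
  unfold specRad
  have hmap : (A * T * A⁻¹).map Complex.ofReal =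
      A.map Complex.ofReal * T.map Complex.ofReal * A⁻¹.map Complex.ofReal := by
    have h1 := Matrix.map_mul (L := A * T) (M := A⁻¹) (f := Complex.ofRealHom)
    have h2 := Matrix.map_mul (L := A) (M := T) (f := Complex.ofRealHom)
    exact h2 ▸ h1
  have hAA : A * A⁻¹ = 1 := Matrix.mul_nonsing_inv A ((Matrix.isUnit_iff_isUnit_det A).mp hA)
  have hone : A.map Complex.ofReal * A⁻¹.map Complex.ofReal = 1 := by
    have h3 := Matrix.map_mul (L := A) (M := A⁻¹) (f := Complex.ofRealHom)
    rw [hAA, Matrix.map_one _ (map_zero _) (map_one _)] at h3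
    exact h3.symm
  have hAu : IsUnit (A.map Complex.ofReal) := ⟨⟨_, _, hone, mul_eq_one_comm.mp hone⟩, rfl⟩
  have hinv : A⁻¹.map Complex.ofReal = (A.map Complex.ofReal)⁻¹ :=
    (Matrix.inv_eq_right_inv hone).symm
  rw [hmap, hinv, ← hAu.unit_spec, ← Matrix.coe_units_inv, spectrum.units_conjugate]

theorem stmt_4 {n : ℕ} (A U V F G : Matrix (Fin n) (Fin n) ℝ)
    (hA : IsUnit A) (hU : IsUnit U) (hF : IsUnit F)
    (hAUV : A = U - V) (hUFG : U = F - G)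
    (hcomm : V * F⁻¹ * G = G * F⁻¹ * V) :
    ∀ s : ℕ, 1 ≤ s →
      twoStageThat F G V s = A * twoStageT F G V s * A⁻¹ ∧
      specRad (twoStageThat F G V s) = specRad (twoStageT F G V s) := by
  intro s hs
  set H := F⁻¹ * G with hH
  set Hh := G * F⁻¹ with hHh
  have hFF : F * F⁻¹ = 1 := Matrix.mul_nonsing_inv F ((Matrix.isUnit_iff_isUnit_det F).mp hF)
  have hAexp : A = F - G - V := by rw [hAUV, hUFG]
  have hFd := (Matrix.isUnit_iff_isUnit_det F).mp hF
  have hFH : F * H = Hh * F := by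
    rw [hH, hHh, ← mul_assoc, hFF, one_mul, mul_assoc, Matrix.nonsing_inv_mul F hFd, mul_one]
  have hGH : G * H = Hh * G := by rw [hH, hHh, ← mul_assoc]
  have hVH : V * H = Hh * V := by
    rw [hH, hHh, ← mul_assoc]
    exact hcomm
  have hAH : A * H = Hh * A := by
    rw [hAexp, sub_mul, sub_mul, mul_sub, mul_sub, hFH, hGH, hVH]
  have hAFV : A * (F⁻¹ * V) = V * F⁻¹ * A := by
    rw [hAexp]
    have h1 : (F - G - V) * (F⁻¹ * V) = V - G * F⁻¹ * V - V * F⁻¹ * V := by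
      rw [sub_mul, sub_mul, ← mul_assoc, hFF, one_mul, ← mul_assoc, ← mul_assoc]
    have h2 : V * F⁻¹ * (F - G - V) = V - V * F⁻¹ * G - V * F⁻¹ * V := by
      rw [mul_sub, mul_sub, mul_assoc V F⁻¹ F, Matrix.nonsing_inv_mul F
        ((Matrix.isUnit_iff_isUnit_det F).mp hF), mul_one]
    rw [h1, h2, hcomm]
  have hApow : ∀ j : ℕ, A * H ^ j = Hh ^ j * A := conj_pow_aux A H Hh hAH
  have hAsum : A * (∑ j ∈ Finset.range s, H ^ j) = (∑ j ∈ Finset.range s, Hh ^ j) * A := by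
    rw [Finset.mul_sum, Finset.sum_mul]
    exact Finset.sum_congr rfl fun j _ => hApow j
  have hkey : A * twoStageT F G V s = twoStageThat F G V s * A := by
    unfold twoStageT twoStageThat
    rw [mul_add, add_mul, hApow s, ← hH, ← hHh]
    congr 1
    calc A * ((∑ j ∈ Finset.range s, H ^ j) * (F⁻¹ * V))
        = A * (∑ j ∈ Finset.range s, H ^ j) * (F⁻¹ * V) := by rw [mul_assoc]
      _ = (∑ j ∈ Finset.range s, Hh ^ j) * A * (F⁻¹ * V) := by rw [hAsum]
      _ = (∑ j ∈ Finset.range s, Hh ^ j) * (A * (F⁻¹ * V)) := by rw [mul_assoc]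
      _ = (∑ j ∈ Finset.range s, Hh ^ j) * (V * F⁻¹ * A) := by rw [hAFV]
      _ = (∑ j ∈ Finset.range s, Hh ^ j) * (V * F⁻¹) * A := by simp only [mul_assoc]
  have hAA : A * A⁻¹ = 1 := Matrix.mul_nonsing_inv A ((Matrix.isUnit_iff_isUnit_det A).mp hA)
  have hsim : twoStageThat F G V s = A * twoStageT F G V s * A⁻¹ := by
    rw [hkey, mul_assoc, hAA, mul_one]
  refine ⟨hsim, ?_⟩
  rw [hsim, specRad_conj _ _ hA]
end

section
/- Let A, U, F ∈ ℝ^{n×n} be invertible with A = U − V and U = F − G. If V F⁻¹ G = G F⁻¹ V, then for every integer s ≥ 1 one has T̂_s = I − (I − (GF⁻¹)^s)(I − V U⁻¹). -/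
open Matrix Finset Filter

theorem stmt_5 {n : ℕ} (A U V F G : Matrix (Fin n) (Fin n) ℝ)
    (hA : IsUnit A) (hU : IsUnit U) (hF : IsUnit F)
    (hAUV : A = U - V) (hUFG : U = F - G)
    (hcomm : V * F⁻¹ * G = G * F⁻¹ * V) :
    ∀ s : ℕ, 1 ≤ s →
      twoStageThat F G V s = 1 - (1 - (G * F⁻¹) ^ s) * (1 - V * U⁻¹) := by
  intro s hs
  have hFd : IsUnit F.det := (Matrix.isUnit_iff_isUnit_det F).mp hF
  have hUd : IsUnit U.det := (Matrix.isUnit_iff_isUnit_det U).mp hU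
  have hFF : F * F⁻¹ = 1 := Matrix.mul_nonsing_inv F hFd
  have hUU : U * U⁻¹ = 1 := Matrix.mul_nonsing_inv U hUd
  have hUF : 1 - G * F⁻¹ = U * F⁻¹ := by
    rw [hUFG, Matrix.sub_mul, hFF]
  have h1 : V * F⁻¹ * F = V := by
    rw [Matrix.mul_assoc, Matrix.nonsing_inv_mul F hFd, Matrix.mul_one]
  have hkey : U * F⁻¹ * V = V * F⁻¹ * U := by
    rw [hUFG, Matrix.sub_mul, Matrix.sub_mul, Matrix.mul_sub, hFF, Matrix.one_mul, h1, hcomm]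
  have hkey2 : (1 - G * F⁻¹) * (V * U⁻¹) = V * F⁻¹ := by
    rw [hUF, show U * F⁻¹ * (V * U⁻¹) = (U * F⁻¹ * V) * U⁻¹ by noncomm_ring,
      hkey, Matrix.mul_assoc, hUU, Matrix.mul_one]
  have hgeom : (1 - (G * F⁻¹) ^ s) = (∑ j ∈ Finset.range s, (G * F⁻¹) ^ j) * (1 - G * F⁻¹) := by
    have := geom_sum_mul (G * F⁻¹) s
    rw [Matrix.mul_sub, Matrix.mul_one] at *
    linear_combination (norm := noncomm_ring) this
  rw [twoStageThat, show 1 - (1 - (G * F⁻¹) ^ s) * (1 - V * U⁻¹)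
      = (G * F⁻¹) ^ s + (1 - (G * F⁻¹) ^ s) * (V * U⁻¹) by noncomm_ring,
    hgeom, Matrix.mul_assoc, hkey2]
end

section
/- Let A = U − V be a convergent K-regular splitting of A ∈ ℝ^{n×n} and let U = F − G be a convergent K-weak regular splitting of type II such that V F⁻¹ G = G F⁻¹ V. Then for every integer s ≥ 1, the two-stage iteration matrix T_s satisfies ρ(T_s) < 1. -/
open Matrix Finset Filter

namespace TwoStageAux

open Topology

variable {n : ℕ} {K : Set (Fin n → ℝ)} {M N : Matrix (Fin n) (Fin n) ℝ}

lemma cone_zero (hK : IsProperCone K) : (0 : Fin n → ℝ) ∈ K := by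
  have h0 : (0 : Fin n → ℝ) ∈ ({0} : Set (Fin n → ℝ)) := rfl
  rw [← hK.2.2.2.1] at h0
  exact h0.1

lemma cone_smul (hK : IsProperCone K) {c : ℝ} (hc : 0 ≤ c) {x} (hx : x ∈ K) : c • x ∈ K :=
  hK.2.2.1 c hc x hx

lemma cone_add (hK : IsProperCone K) {x y} (hx : x ∈ K) (hy : y ∈ K) : x + y ∈ K := by
  have h := hK.2.1 hx hy (by norm_num : (0:ℝ) ≤ 1/2) (by norm_num : (0:ℝ) ≤ 1/2)
    (by norm_num)
  have h2 := cone_smul hK (by norm_num : (0:ℝ) ≤ 2) h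
  have : x + y = (2:ℝ) • ((1/2:ℝ) • x + (1/2:ℝ) • y) := by module
  rw [this]; exact h2

lemma cone_pointed (hK : IsProperCone K) {x} (hx : x ∈ K) (hx' : -x ∈ K) : x = 0 := by
  have : x ∈ K ∩ (-K) := ⟨hx, by simpa [Set.mem_neg] using hx'⟩
  rw [hK.2.2.2.1] at this
  exact this

lemma knonneg_mul (hM : KNonneg K M) (hN : KNonneg K N) : KNonneg K (M * N) := fun x hx => by
  rw [← Matrix.mulVec_mulVec]; exact hM _ (hN _ hx)

lemma knonneg_pow (hK : IsProperCone K) (hM : KNonneg K M) (k : ℕ) : KNonneg K (M ^ k) := by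
  induction k with
  | zero => intro x hx; simpa [Matrix.one_mulVec] using hx
  | succ k ih => rw [pow_succ]; exact knonneg_mul ih hM

lemma knonneg_add (hK : IsProperCone K) (hM : KNonneg K M) (hN : KNonneg K N) :
    KNonneg K (M + N) := fun x hx => by
  rw [Matrix.add_mulVec]; exact cone_add hK (hM _ hx) (hN _ hx)

lemma knonneg_sum (hK : IsProperCone K) {s : Finset ℕ} {f : ℕ → Matrix (Fin n) (Fin n) ℝ}
    (hf : ∀ j ∈ s, KNonneg K (f j)) : KNonneg K (∑ j ∈ s, f j) := by
  classical
  refine Finset.sum_induction f (KNonneg K) (fun a b ha hb => knonneg_add hK ha hb) ?_ hf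
  intro x hx
  rw [Matrix.zero_mulVec]; exact cone_zero hK

lemma int_absorb (hK : IsProperCone K) {u : Fin n → ℝ} (hu : u ∈ interior K)
    (x : Fin n → ℝ) : ∃ t > (0:ℝ), t • u - x ∈ K ∧ t • u + x ∈ K := by
  rw [mem_interior_iff_mem_nhds, Metric.mem_nhds_iff] at hu
  obtain ⟨r, hr, hball⟩ := hu
  set δ : ℝ := r / (2 * (‖x‖ + 1)) with hδdef
  have hxpos : (0:ℝ) < ‖x‖ + 1 := by positivity
  have hδ : 0 < δ := by positivity
  have hkey : ∀ y : Fin n → ℝ, ‖y‖ = ‖x‖ → u + δ • y ∈ K := by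
    intro y hy
    apply hball
    rw [Metric.mem_ball, dist_eq_norm]
    have : u + δ • y - u = δ • y := by abel
    rw [this, norm_smul]
    have h1 : ‖δ‖ = δ := abs_of_pos hδ
    rw [h1, hy, hδdef, div_mul_eq_mul_div, div_lt_iff₀ (by positivity)]
    nlinarith [norm_nonneg x]
  refine ⟨δ⁻¹, by positivity, ?_, ?_⟩
  · have h := hkey (-x) (by simp)
    have h2 := cone_smul hK (le_of_lt (by positivity : (0:ℝ) < δ⁻¹)) h
    have : δ⁻¹ • (u + δ • (-x)) = δ⁻¹ • u - x := by
      rw [smul_add, smul_smul, inv_mul_cancel₀ (ne_of_gt hδ)]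
      module
    rwa [this] at h2
  · have h := hkey x rfl
    have h2 := cone_smul hK (le_of_lt (by positivity : (0:ℝ) < δ⁻¹)) h
    have : δ⁻¹ • (u + δ • x) = δ⁻¹ • u + x := by
      rw [smul_add, smul_smul, inv_mul_cancel₀ (ne_of_gt hδ)]
      module
    rwa [this] at h2

lemma mulVec_continuous (P : Matrix (Fin n) (Fin n) ℝ) :
    Continuous (fun x : Fin n → ℝ => P.mulVec x) := by
  have : (fun x : Fin n → ℝ => P.mulVec x) = (P.mulVecLin : (Fin n → ℝ) →ₗ[ℝ] (Fin n → ℝ)) := by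
    funext x; rfl
  rw [this]
  exact LinearMap.continuous_of_finiteDimensional _

lemma mulVec_interior (hK : IsProperCone K) (hMu : IsUnit M) (hM : KNonneg K M)
    {u : Fin n → ℝ} (hu : u ∈ interior K) : M.mulVec u ∈ interior K := by
  have hdet : IsUnit M.det := (Matrix.isUnit_iff_isUnit_det M).mp hMu
  set O : Set (Fin n → ℝ) := (fun y => M⁻¹.mulVec y) ⁻¹' (interior K) with hO
  have hOopen : IsOpen O := (mulVec_continuous M⁻¹).isOpen_preimage _ isOpen_interior
  have hmem : M.mulVec u ∈ O := by
    simp only [hO, Set.mem_preimage, Matrix.mulVec_mulVec, Matrix.nonsing_inv_mul M hdet,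
      Matrix.one_mulVec]
    exact hu
  have hsub : O ⊆ K := by
    intro y hy
    have h1 : M⁻¹.mulVec y ∈ K := interior_subset hy
    have h2 := hM _ h1
    rwa [Matrix.mulVec_mulVec, Matrix.mul_nonsing_inv M hdet, Matrix.one_mulVec] at h2
  exact interior_maximal hsub hOopen hmem


lemma order_interval_bound (hK : IsProperCone K) {u : Fin n → ℝ} (hu : u ∈ interior K) :
    ∃ R : ℝ, 0 ≤ R ∧ ∀ c : ℝ, 0 ≤ c → ∀ x : Fin n → ℝ,
      c • u - x ∈ K → c • u + x ∈ K → ‖x‖ ≤ c * R := by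
  suffices h1 : ∃ R : ℝ, 0 ≤ R ∧ ∀ x : Fin n → ℝ, u - x ∈ K → u + x ∈ K → ‖x‖ ≤ R by
    obtain ⟨R, hR0, hR⟩ := h1
    refine ⟨R, hR0, ?_⟩
    intro c hc x hx1 hx2
    rcases eq_or_lt_of_le hc with h | h
    · rw [← h, zero_smul, zero_sub] at hx1
      rw [← h, zero_smul, zero_add] at hx2
      rw [cone_pointed hK hx2 hx1]
      simp [← h]
    · have key := hR (c⁻¹ • x) ?_ ?_
      · rw [norm_smul, Real.norm_eq_abs, abs_of_pos (inv_pos.mpr h)] at key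
        rw [← mul_le_mul_iff_right₀ (inv_pos.mpr h), ← mul_assoc, inv_mul_cancel₀ (ne_of_gt h),
          one_mul]
        exact key
      · have := cone_smul hK (le_of_lt (inv_pos.mpr h)) hx1
        rwa [smul_sub, smul_smul, inv_mul_cancel₀ (ne_of_gt h), one_smul] at this
      · have := cone_smul hK (le_of_lt (inv_pos.mpr h)) hx2
        rwa [smul_add, smul_smul, inv_mul_cancel₀ (ne_of_gt h), one_smul] at this
  by_contra hcon
  push_neg at hcon
  have hex : ∀ m : ℕ, ∃ x : Fin n → ℝ, u - x ∈ K ∧ u + x ∈ K ∧ (m : ℝ) < ‖x‖ := by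
    intro m
    obtain ⟨x, hx1, hx2, hx3⟩ := hcon (m : ℝ) (Nat.cast_nonneg m)
    exact ⟨x, hx1, hx2, hx3⟩
  choose x hx1 hx2 hx3 using hex
  have hnormpos : ∀ m, 0 < ‖x m‖ := fun m => lt_of_le_of_lt (Nat.cast_nonneg m) (hx3 m)
  set y : ℕ → (Fin n → ℝ) := fun m => ‖x m‖⁻¹ • x m with hy
  have hysphere : ∀ m, y m ∈ Metric.sphere (0 : Fin n → ℝ) 1 := by
    intro m
    rw [mem_sphere_zero_iff_norm, hy, norm_smul, Real.norm_eq_abs,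
      abs_of_pos (inv_pos.mpr (hnormpos m)), inv_mul_cancel₀ (ne_of_gt (hnormpos m))]
  obtain ⟨a, ha, φ, hφ, hconv⟩ :=
    tendsto_subseq_of_bounded Metric.isBounded_sphere hysphere
  rw [Metric.isClosed_sphere.closure_eq, mem_sphere_zero_iff_norm] at ha
  have hinv : Tendsto (fun m => ‖x (φ m)‖⁻¹) atTop (𝓝 0) := by
    apply Filter.Tendsto.inv_tendsto_atTop
    apply tendsto_atTop_mono (fun m => ?_) tendsto_natCast_atTop_atTop
    calc (m : ℝ) ≤ (φ m : ℝ) := Nat.cast_le.mpr (hφ.le_apply)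
    _ ≤ ‖x (φ m)‖ := le_of_lt (hx3 (φ m))
  have haK : a ∈ K := by
    apply hK.1.mem_of_tendsto (f := fun m => ‖x (φ m)‖⁻¹ • u + y (φ m))
      (b := atTop)
    · have h1 : Tendsto (fun m => ‖x (φ m)‖⁻¹ • u) atTop (𝓝 ((0:ℝ) • u)) :=
        hinv.smul_const u
      rw [zero_smul] at h1
      have := h1.add hconv
      rwa [zero_add] at this
    · filter_upwards with m
      have h2 := cone_smul hK (le_of_lt (inv_pos.mpr (hnormpos (φ m)))) (hx2 (φ m))
      rwa [smul_add] at h2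
  have hnaK : -a ∈ K := by
    apply hK.1.mem_of_tendsto (f := fun m => ‖x (φ m)‖⁻¹ • u - y (φ m)) (b := atTop)
    · have h1 : Tendsto (fun m => ‖x (φ m)‖⁻¹ • u) atTop (𝓝 ((0:ℝ) • u)) :=
        hinv.smul_const u
      rw [zero_smul] at h1
      have := h1.sub hconv
      rwa [zero_sub] at this
    · filter_upwards with m
      have h2 := cone_smul hK (le_of_lt (inv_pos.mpr (hnormpos (φ m)))) (hx1 (φ m))
      rwa [smul_sub] at h2
  rw [cone_pointed hK haK hnaK] at ha
  simp at ha


lemma mulVec_map_re (P : Matrix (Fin n) (Fin n) ℝ) (v : Fin n → ℂ) (i : Fin n) :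
    ((P.map Complex.ofReal).mulVec v i).re = (P.mulVec fun j => (v j).re) i := by
  simp [Matrix.mulVec, dotProduct, Matrix.map_apply, Complex.re_sum, Complex.mul_re]

lemma mulVec_map_im (P : Matrix (Fin n) (Fin n) ℝ) (v : Fin n → ℂ) (i : Fin n) :
    ((P.map Complex.ofReal).mulVec v i).im = (P.mulVec fun j => (v j).im) i := by
  simp [Matrix.mulVec, dotProduct, Matrix.map_apply, Complex.im_sum, Complex.mul_im]

lemma map_pow_ofReal (S : Matrix (Fin n) (Fin n) ℝ) (k : ℕ) :
    (S ^ k).map Complex.ofReal = (S.map Complex.ofReal) ^ k := by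
  have : ∀ P : Matrix (Fin n) (Fin n) ℝ, P.map Complex.ofReal =
      (Complex.ofRealHom.mapMatrix : Matrix (Fin n) (Fin n) ℝ →+* Matrix (Fin n) (Fin n) ℂ) P :=
    fun P => rfl
  rw [this, this, map_pow]

lemma specRad_le_of_cone (hK : IsProperCone K) {S : Matrix (Fin n) (Fin n) ℝ}
    (hS : KNonneg K S) {u : Fin n → ℝ} (hu : u ∈ interior K) {θ : ℝ} (hθ : 0 < θ)
    (hSu : θ • u - S.mulVec u ∈ K) : specRad S ≤ θ := by
  apply Real.sSup_le _ (le_of_lt hθ)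
  rintro - ⟨μ, hμ, rfl⟩
  -- extract an eigenvector for μ
  have hnotunit : ¬ IsUnit (μ • (1 : Matrix (Fin n) (Fin n) ℂ) - S.map Complex.ofReal) := by
    rw [spectrum.mem_iff] at hμ
    rwa [Algebra.algebraMap_eq_smul_one] at hμ
  have hdet : (μ • (1 : Matrix (Fin n) (Fin n) ℂ) - S.map Complex.ofReal).det = 0 := by
    by_contra hd
    exact hnotunit ((Matrix.isUnit_iff_isUnit_det _).mpr (isUnit_iff_ne_zero.mpr hd))
  obtain ⟨v, hv0, hveq⟩ := Matrix.exists_mulVec_eq_zero_iff.mpr hdet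
  have heig : (S.map Complex.ofReal).mulVec v = μ • v := by
    rw [Matrix.sub_mulVec, Matrix.smul_mulVec, Matrix.one_mulVec, sub_eq_zero] at hveq
    exact hveq.symm
  have heigk : ∀ k : ℕ, ((S ^ k).map Complex.ofReal).mulVec v = μ ^ k • v := by
    intro k
    induction k with
    | zero => simp [Matrix.one_mulVec]
    | succ k ih =>
      rw [map_pow_ofReal, pow_succ', ← Matrix.mulVec_mulVec, ← map_pow_ofReal, ih,
        Matrix.mulVec_smul, heig, smul_smul, ← pow_succ]
  obtain ⟨i0, hi0⟩ := Function.ne_iff.mp hv0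
  obtain ⟨tr, htr, htr1, htr2⟩ := int_absorb hK hu (fun j => (v j).re)
  obtain ⟨ti, hti, hti1, hti2⟩ := int_absorb hK hu (fun j => (v j).im)
  obtain ⟨R, hR0, hR⟩ := order_interval_bound hK hu
  -- cone iteration
  have iter : ∀ (t : ℝ), 0 ≤ t → ∀ x : Fin n → ℝ, t • u - x ∈ K → t • u + x ∈ K →
      ∀ k : ℕ, (θ ^ k * t) • u - (S ^ k).mulVec x ∈ K ∧
        (θ ^ k * t) • u + (S ^ k).mulVec x ∈ K := by
    intro t ht x h1 h2 k
    induction k with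
    | zero =>
      simpa [pow_zero, one_mul, Matrix.one_mulVec] using And.intro h1 h2
    | succ k ih =>
      obtain ⟨ih1, ih2⟩ := ih
      have hc : (0:ℝ) ≤ θ ^ k * t := by positivity
      have hs1 := hS _ ih1
      have hs2 := hS _ ih2
      rw [Matrix.mulVec_sub] at hs1
      rw [Matrix.mulVec_add] at hs2
      rw [Matrix.mulVec_smul] at hs1 hs2
      have hscone := cone_smul hK hc hSu
      rw [smul_sub, smul_smul] at hscone
      constructor
      · have := cone_add hK hscone hs1
        have heq : (θ ^ k * t * θ) • u - (θ ^ k * t) • S.mulVec u +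
            ((θ ^ k * t) • S.mulVec u - S.mulVec ((S ^ k).mulVec x)) =
            (θ ^ (k+1) * t) • u - (S ^ (k+1)).mulVec x := by
          rw [show S ^ (k+1) = S * S ^ k from pow_succ' S k, ← Matrix.mulVec_mulVec,
            show θ ^ (k+1) * t = θ ^ k * t * θ by ring]
          abel
        rwa [heq] at this
      · have := cone_add hK hscone hs2
        have heq : (θ ^ k * t * θ) • u - (θ ^ k * t) • S.mulVec u +
            ((θ ^ k * t) • S.mulVec u + S.mulVec ((S ^ k).mulVec x)) =
            (θ ^ (k+1) * t) • u + (S ^ (k+1)).mulVec x := by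
          rw [show S ^ (k+1) = S * S ^ k from pow_succ' S k, ← Matrix.mulVec_mulVec,
            show θ ^ (k+1) * t = θ ^ k * t * θ by ring]
          abel
        rwa [heq] at this
  have hboundr : ∀ k : ℕ, ‖(S ^ k).mulVec (fun j => (v j).re)‖ ≤ θ ^ k * tr * R := by
    intro k
    obtain ⟨h1, h2⟩ := iter tr (le_of_lt htr) _ htr1 htr2 k
    have := hR (θ ^ k * tr) (by positivity) _ h1 h2
    linarith [this]
  have hboundi : ∀ k : ℕ, ‖(S ^ k).mulVec (fun j => (v j).im)‖ ≤ θ ^ k * ti * R := by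
    intro k
    obtain ⟨h1, h2⟩ := iter ti (le_of_lt hti) _ hti1 hti2 k
    have := hR (θ ^ k * ti) (by positivity) _ h1 h2
    linarith [this]
  have habs0 : 0 < ‖v i0‖ := norm_pos_iff.mpr (by simpa using hi0)
  have hμk : ∀ k : ℕ, ‖μ‖ ^ k * ‖v i0‖ ≤ θ ^ k * ((tr + ti) * R) := by
    intro k
    have h1 : ‖μ‖ ^ k * ‖v i0‖ =
        ‖((S ^ k).map Complex.ofReal).mulVec v i0‖ := by
      rw [heigk k]
      simp [Pi.smul_apply, smul_eq_mul, _root_.map_mul, _root_.map_pow, mul_comm]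
    rw [h1]
    calc ‖((S ^ k).map Complex.ofReal).mulVec v i0‖
        ≤ |(((S ^ k).map Complex.ofReal).mulVec v i0).re| +
          |(((S ^ k).map Complex.ofReal).mulVec v i0).im| :=
          Complex.norm_le_abs_re_add_abs_im _
      _ ≤ ‖(S ^ k).mulVec (fun j => (v j).re)‖ + ‖(S ^ k).mulVec (fun j => (v j).im)‖ := by
          rw [mulVec_map_re, mulVec_map_im]
          exact add_le_add (by simpa using norm_le_pi_norm ((S ^ k).mulVec fun j => (v j).re) i0)
            (by simpa using norm_le_pi_norm ((S ^ k).mulVec fun j => (v j).im) i0)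
      _ ≤ θ ^ k * tr * R + θ ^ k * ti * R := add_le_add (hboundr k) (hboundi k)
      _ = θ ^ k * ((tr + ti) * R) := by ring
  by_contra hgt
  push_neg at hgt
  have hC : ∀ k : ℕ, (‖μ‖ / θ) ^ k ≤ (tr + ti) * R / ‖v i0‖ := by
    intro k
    rw [div_pow, div_le_div_iff₀ (by positivity) habs0]
    calc ‖μ‖ ^ k * ‖v i0‖ ≤ θ ^ k * ((tr + ti) * R) := hμk k
    _ = (tr + ti) * R * θ ^ k := by ring
  have hone : 1 < ‖μ‖ / θ := (one_lt_div hθ).mpr hgt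
  obtain ⟨k, hk⟩ := ((tendsto_pow_atTop_atTop_of_one_lt hone).eventually_gt_atTop
    ((tr + ti) * R / ‖v i0‖)).exists
  exact absurd (hC k) (not_le.mpr hk)


lemma mulVec_map_ofReal {n : ℕ} (P : Matrix (Fin n) (Fin n) ℝ) (x : Fin n → ℝ) :
    (P.map Complex.ofReal).mulVec (fun j => (x j : ℂ)) = fun i => ((P.mulVec x) i : ℂ) := by
  funext i
  simp [Matrix.mulVec, dotProduct, Matrix.map_apply, ← Complex.ofReal_mul,
    ← Complex.ofReal_sum]

lemma map_pow_ofReal' {n : ℕ} (S : Matrix (Fin n) (Fin n) ℝ) (k : ℕ) :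
    (S ^ k).map Complex.ofReal = (S.map Complex.ofReal) ^ k := by
  have : ∀ P : Matrix (Fin n) (Fin n) ℝ, P.map Complex.ofReal =
      (Complex.ofRealHom.mapMatrix : Matrix (Fin n) (Fin n) ℝ →+* Matrix (Fin n) (Fin n) ℂ) P :=
    fun P => rfl
  rw [this, this, map_pow]

section Gelfand
attribute [local instance] Matrix.linftyOpNormedRing Matrix.linftyOpNormedAlgebra

lemma pow_mulVec_tendsto_zero {n : ℕ} (hn : 0 < n) {M : Matrix (Fin n) (Fin n) ℝ}
    (h : specRad M < 1) (x : Fin n → ℝ) :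
    Tendsto (fun k => (M ^ k).mulVec x) atTop (𝓝 0) := by
  haveI : Nonempty (Fin n) := Fin.pos_iff_nonempty.mp hn
  haveI : CompleteSpace (Matrix (Fin n) (Fin n) ℂ) := FiniteDimensional.complete ℂ _
  set Aℂ := M.map Complex.ofReal with hA
  have hbdd : BddAbove ((fun z : ℂ => ‖z‖) '' spectrum ℂ Aℂ) := by
    refine ⟨‖Aℂ‖, ?_⟩
    rintro - ⟨z, hz, rfl⟩
    simpa using spectrum.norm_le_norm_of_mem hz
  set ρ : ℝ := max (specRad M) 0 with hρdef
  have hρ0 : 0 ≤ ρ := le_max_right _ _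
  have hρ1 : ρ < 1 := max_lt h one_pos
  have hub : ∀ z ∈ spectrum ℂ Aℂ, ‖z‖ ≤ ρ := by
    intro z hz
    exact le_max_of_le_left (le_csSup hbdd ⟨z, hz, rfl⟩)
  set r : ℝ := (ρ + 1) / 2 with hrdef
  have hr0 : 0 < r := by positivity
  have hr1 : r < 1 := by rw [hrdef]; linarith
  have hρr : ρ < r := by rw [hrdef]; linarith
  have hsp : spectralRadius ℂ Aℂ < ENNReal.ofReal r := by
    have h1 : spectralRadius ℂ Aℂ ≤ ENNReal.ofReal ρ := by
      rw [spectralRadius]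
      refine iSup₂_le fun z hz => ?_
      simp only [← enorm_eq_nnnorm, ← ofReal_norm]
      exact ENNReal.ofReal_le_ofReal (by simpa using hub z hz)
    exact lt_of_le_of_lt h1 (by
      rw [ENNReal.ofReal_lt_ofReal_iff hr0]
      exact hρr)
  have hgel := spectrum.pow_nnnorm_pow_one_div_tendsto_nhds_spectralRadius Aℂ
  have hev : ∀ᶠ k : ℕ in atTop, (‖Aℂ ^ k‖₊ : ENNReal) ^ (1 / (k:ℝ)) < ENNReal.ofReal r :=
    hgel.eventually_lt_const hsp
  have hbound : ∀ᶠ k : ℕ in atTop, ‖Aℂ ^ k‖ ≤ r ^ k := by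
    filter_upwards [hev, eventually_ge_atTop 1] with k hk hk1
    have hk0 : (k : ℝ) ≠ 0 := by positivity
    have h2 : ((‖Aℂ ^ k‖₊ : ENNReal) ^ (1 / (k:ℝ))) ^ (k:ℝ) ≤ (ENNReal.ofReal r) ^ (k:ℝ) :=
      ENNReal.rpow_le_rpow (le_of_lt hk) (by positivity)
    rw [← ENNReal.rpow_mul, one_div_mul_cancel hk0, ENNReal.rpow_one] at h2
    have h3 : (ENNReal.ofReal r) ^ (k:ℝ) = ENNReal.ofReal (r ^ k) := by
      rw [← Real.rpow_natCast r k, ENNReal.ofReal_rpow_of_pos hr0]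
    rw [h3] at h2
    simp only [← enorm_eq_nnnorm, ← ofReal_norm] at h2
    exact (ENNReal.ofReal_le_ofReal_iff (by positivity)).mp h2
  have hvec : ∀ k : ℕ, ‖(M ^ k).mulVec x‖ ≤ ‖Aℂ ^ k‖ * ‖fun j => (x j : ℂ)‖ := by
    intro k
    have hle : ‖(M ^ k).mulVec x‖ ≤ ‖(Aℂ ^ k).mulVec (fun j => (x j : ℂ))‖ := by
      rw [← map_pow_ofReal', mulVec_map_ofReal]
      apply pi_norm_le_iff_of_nonneg (norm_nonneg _) |>.mpr
      intro i
      calc ‖(M ^ k).mulVec x i‖ = ‖(((M ^ k).mulVec x i : ℝ) : ℂ)‖ := by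
            rw [Complex.norm_real]
      _ ≤ ‖fun i => (((M ^ k).mulVec x i : ℝ) : ℂ)‖ := by
            exact norm_le_pi_norm (fun i : Fin n => (((M ^ k).mulVec x i : ℝ) : ℂ)) i
    refine le_trans hle ?_
    rw [hA]
    exact Matrix.linfty_opNorm_mulVec _ _
  rw [tendsto_zero_iff_norm_tendsto_zero]
  apply squeeze_zero' (Filter.Eventually.of_forall fun k => norm_nonneg _)
  · filter_upwards [hbound] with k hk
    exact le_trans (hvec k) (by
      have := mul_le_mul_of_nonneg_right hk (norm_nonneg (fun j => (x j : ℂ)))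
      exact this)
  · have := (tendsto_pow_atTop_nhds_zero_of_lt_one (le_of_lt hr0) hr1).mul_const
      (‖fun j => (x j : ℂ)‖)
    simpa using this

end Gelfand


lemma isUnit_one_sub_of_pow_tendsto {M : Matrix (Fin n) (Fin n) ℝ}
    (hpow : ∀ x, Tendsto (fun k => (M ^ k).mulVec x) atTop (𝓝 0)) :
    IsUnit (1 - M) := by
  rw [Matrix.isUnit_iff_isUnit_det, isUnit_iff_ne_zero]
  intro hdet
  obtain ⟨v, hv0, hveq⟩ := Matrix.exists_mulVec_eq_zero_iff.mpr hdet
  have hMv : M.mulVec v = v := by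
    rw [Matrix.sub_mulVec, Matrix.one_mulVec, sub_eq_zero] at hveq
    exact hveq.symm
  have hk : ∀ k, (M ^ k).mulVec v = v := by
    intro k
    induction k with
    | zero => simp [Matrix.one_mulVec]
    | succ k ih =>
      rw [show M ^ (k+1) = M * M ^ k from pow_succ' M k, ← Matrix.mulVec_mulVec, ih, hMv]
  have htend := hpow v
  simp_rw [hk] at htend
  exact hv0 (tendsto_nhds_unique tendsto_const_nhds htend)

lemma geom_sum_eq_sub (M W : Matrix (Fin n) (Fin n) ℝ)
    (h1 : (1 - M) * W = 1) (m : ℕ) :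
    (∑ j ∈ Finset.range m, M ^ j) = W - (M ^ m) * W := by
  have hgeo : (∑ j ∈ Finset.range m, M ^ j) * (1 - M) = 1 - M ^ m := by
    have h := geom_sum_mul M m
    calc (∑ j ∈ Finset.range m, M ^ j) * (1 - M)
        = -((∑ j ∈ Finset.range m, M ^ j) * (M - 1)) := by noncomm_ring
      _ = -(M ^ m - 1) := by rw [h]
      _ = 1 - M ^ m := by abel
  calc (∑ j ∈ Finset.range m, M ^ j)
      = (∑ j ∈ Finset.range m, M ^ j) * ((1 - M) * W) := by rw [h1, mul_one]
    _ = ((∑ j ∈ Finset.range m, M ^ j) * (1 - M)) * W := by rw [mul_assoc]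
    _ = (1 - M ^ m) * W := by rw [hgeo]
    _ = W - M ^ m * W := by rw [sub_mul, one_mul]

lemma inv_knonneg_of_pow_tendsto (hK : IsProperCone K) {M W : Matrix (Fin n) (Fin n) ℝ}
    (hM : KNonneg K M) (h1 : (1 - M) * W = 1)
    (hpow : ∀ x, Tendsto (fun k => (M ^ k).mulVec x) atTop (𝓝 0)) :
    KNonneg K W := by
  intro x hx
  have hmem : ∀ m, (W - (M ^ m) * W).mulVec x ∈ K := by
    intro m
    rw [← geom_sum_eq_sub M W h1 m]
    exact knonneg_sum hK (fun j _ => knonneg_pow hK hM j) x hx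
  have htends : Tendsto (fun m => (W - (M ^ m) * W).mulVec x) atTop (𝓝 (W.mulVec x)) := by
    have heq : ∀ m, (W - (M ^ m) * W).mulVec x =
        W.mulVec x - (M ^ m).mulVec (W.mulVec x) := by
      intro m
      rw [Matrix.sub_mulVec, Matrix.mulVec_mulVec]
    simp_rw [heq]
    have := tendsto_const_nhds (x := W.mulVec x) (f := atTop (α := ℕ)) |>.sub
      (hpow (W.mulVec x))
    simpa using this
  exact hK.1.mem_of_tendsto htends (Eventually.of_forall hmem)

lemma specRad_conj {P S : Matrix (Fin n) (Fin n) ℝ} (hP : IsUnit P) :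
    specRad (P * S * P⁻¹) = specRad S := by
  unfold specRad
  have hmap : ∀ X : Matrix (Fin n) (Fin n) ℝ, X.map Complex.ofReal =
      (Complex.ofRealHom.mapMatrix : Matrix (Fin n) (Fin n) ℝ →+* Matrix (Fin n) (Fin n) ℂ) X :=
    fun _ => rfl
  set f := (Complex.ofRealHom.mapMatrix : Matrix (Fin n) (Fin n) ℝ →+* Matrix (Fin n) (Fin n) ℂ)
    with hf
  have hQ : IsUnit (f P) := hP.map f
  have hQdet : IsUnit (f P).det := (Matrix.isUnit_iff_isUnit_det _).mp hQ
  have hPdet : IsUnit P.det := (Matrix.isUnit_iff_isUnit_det P).mp hP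
  have hfPinv : (f P)⁻¹ = f P⁻¹ := by
    apply Matrix.inv_eq_right_inv
    rw [← _root_.map_mul, Matrix.mul_nonsing_inv P hPdet, _root_.map_one]
  have hconj : (P * S * P⁻¹).map Complex.ofReal = f P * (S.map Complex.ofReal) * (f P)⁻¹ := by
    rw [hmap, _root_.map_mul, _root_.map_mul, hfPinv]
    rfl
  rw [hconj]
  have hQinv : IsUnit (f P)⁻¹ :=
    ⟨⟨(f P)⁻¹, f P, Matrix.nonsing_inv_mul _ hQdet, Matrix.mul_nonsing_inv _ hQdet⟩, rfl⟩
  have hspec : spectrum ℂ (f P * (S.map Complex.ofReal) * (f P)⁻¹) =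
      spectrum ℂ (S.map Complex.ofReal) := by
    ext z
    rw [spectrum.mem_iff, spectrum.mem_iff, not_iff_not]
    have hz1 : algebraMap ℂ (Matrix (Fin n) (Fin n) ℂ) z - f P * (S.map Complex.ofReal) * (f P)⁻¹
        = f P * (algebraMap ℂ (Matrix (Fin n) (Fin n) ℂ) z - S.map Complex.ofReal) * (f P)⁻¹ := by
      rw [mul_sub, sub_mul]
      congr 1
      rw [Algebra.algebraMap_eq_smul_one, mul_smul_comm, smul_mul_assoc, mul_one,
        Matrix.mul_nonsing_inv _ hQdet]
    rw [hz1]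
    constructor
    · intro hu
      have hrw : algebraMap ℂ (Matrix (Fin n) (Fin n) ℂ) z - S.map Complex.ofReal =
          (f P)⁻¹ * (f P * (algebraMap ℂ (Matrix (Fin n) (Fin n) ℂ) z - S.map Complex.ofReal) *
            (f P)⁻¹) * f P := by
        have h2 : (f P)⁻¹ * (f P * (algebraMap ℂ (Matrix (Fin n) (Fin n) ℂ) z -
            S.map Complex.ofReal) * (f P)⁻¹) * f P =
            ((f P)⁻¹ * f P) * (algebraMap ℂ (Matrix (Fin n) (Fin n) ℂ) z -
            S.map Complex.ofReal) * ((f P)⁻¹ * f P) := by noncomm_ring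
        rw [h2, Matrix.nonsing_inv_mul _ hQdet, one_mul, mul_one]
      rw [hrw]
      exact (hQinv.mul hu).mul hQ
    · intro hu
      exact (hQ.mul hu).mul hQinv
  rw [hspec]

lemma conj_mul {F X Y : Matrix (Fin n) (Fin n) ℝ} (h : F⁻¹ * F = 1) :
    F * (X * Y) * F⁻¹ = (F * X * F⁻¹) * (F * Y * F⁻¹) := by
  have h1 : (F * X * F⁻¹) * (F * Y * F⁻¹) = F * X * (F⁻¹ * F) * (Y * F⁻¹) := by
    noncomm_ring
  rw [h1, h, mul_one]
  noncomm_ring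


end TwoStageAux

open TwoStageAux in
theorem stmt_6 {n : ℕ} (K : Set (Fin n → ℝ)) (hK : IsProperCone K)
    (A U V F G : Matrix (Fin n) (Fin n) ℝ)
    (houter : KRegularSplitting K A U V) (houterconv : specRad (U⁻¹ * V) < 1)
    (hinner : KWeakRegularSplittingII K U F G) (hinnerconv : specRad (F⁻¹ * G) < 1)
    (hcomm : V * F⁻¹ * G = G * F⁻¹ * V) :
    ∀ s : ℕ, 1 ≤ s → specRad (twoStageT F G V s) < 1 := by
  intro s hs
  rcases Nat.eq_zero_or_pos n with hn | hn
  · -- trivial case `n = 0`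
    subst hn
    haveI : Subsingleton (Matrix (Fin 0) (Fin 0) ℂ) := ⟨fun a b => by ext i j; exact i.elim0⟩
    have hempty : spectrum ℂ ((twoStageT F G V s).map Complex.ofReal) = ∅ := by
      ext z
      simp [spectrum.mem_iff, isUnit_of_subsingleton]
    rw [show specRad (twoStageT F G V s) =
      sSup ((fun z : ℂ => ‖z‖) '' spectrum ℂ ((twoStageT F G V s).map Complex.ofReal)) from rfl, hempty]
    simp [Real.sSup_empty]
  obtain ⟨hA, hU, hUinv, hV⟩ := houter
  obtain ⟨hUFG, hF, hFinv, hGF⟩ := hinner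
  have hFdet : IsUnit F.det := (Matrix.isUnit_iff_isUnit_det F).mp hF
  have hUdet : IsUnit U.det := (Matrix.isUnit_iff_isUnit_det U).mp hU
  have hFF : F * F⁻¹ = 1 := Matrix.mul_nonsing_inv F hFdet
  have hFF' : F⁻¹ * F = 1 := Matrix.nonsing_inv_mul F hFdet
  have hUU' : U⁻¹ * U = 1 := Matrix.nonsing_inv_mul U hUdet
  set Hh := G * F⁻¹ with hHh
  set Vh := V * F⁻¹ with hVh
  set W := F * U⁻¹ with hWdef
  -- conjugation identities
  have hHconj : F * (F⁻¹ * G) * F⁻¹ = Hh := by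
    rw [hHh, ← mul_assoc, hFF, one_mul]
  have hTconj : F * (U⁻¹ * V) * F⁻¹ = W * Vh := by
    rw [hWdef, hVh]
    noncomm_ring
  have hsrH : specRad Hh < 1 := by
    rw [← hHconj, specRad_conj hF]
    exact hinnerconv
  have hsrT : specRad (W * Vh) < 1 := by
    rw [← hTconj, specRad_conj hF]
    exact houterconv
  -- cone-nonnegativity facts
  have hHhN : KNonneg K Hh := hGF
  have hVhN : KNonneg K Vh := knonneg_mul hV hFinv
  have hpowH : ∀ x, Filter.Tendsto (fun k => (Hh ^ k).mulVec x) Filter.atTop (nhds 0) :=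
    fun x => pow_mulVec_tendsto_zero hn hsrH x
  have hW1 : (1 - Hh) * W = 1 := by
    have h1mH : (1 : Matrix (Fin n) (Fin n) ℝ) - Hh = U * F⁻¹ := by
      rw [hHh, hUFG, Matrix.sub_mul, hFF]
    rw [h1mH, hWdef, mul_assoc, ← mul_assoc F⁻¹, hFF', one_mul,
      Matrix.mul_nonsing_inv U hUdet]
  have hWN : KNonneg K W := inv_knonneg_of_pow_tendsto hK hHhN hW1 hpowH
  have hThN : KNonneg K (W * Vh) := knonneg_mul hWN hVhN
  have hpowT : ∀ x, Filter.Tendsto (fun k => ((W * Vh) ^ k).mulVec x) Filter.atTop (nhds 0) :=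
    fun x => pow_mulVec_tendsto_zero hn hsrT x
  have hpowHs : ∀ x, Filter.Tendsto (fun k => ((Hh ^ s) ^ k).mulVec x) Filter.atTop (nhds 0) := by
    intro x
    have hcomp : Filter.Tendsto (fun k : ℕ => s * k) Filter.atTop Filter.atTop :=
      Filter.tendsto_atTop_mono (fun k => Nat.le_mul_of_pos_left k hs) Filter.tendsto_id
    have := (hpowH x).comp hcomp
    simpa [Function.comp_def, pow_mul] using this
  have hUnit1 : IsUnit (1 - Hh ^ s) := isUnit_one_sub_of_pow_tendsto hpowHs
  have hUnit2 : IsUnit (1 - W * Vh) := isUnit_one_sub_of_pow_tendsto hpowT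
  have hdet1 : IsUnit (1 - Hh ^ s).det := (Matrix.isUnit_iff_isUnit_det _).mp hUnit1
  have hdet2 : IsUnit (1 - W * Vh).det := (Matrix.isUnit_iff_isUnit_det _).mp hUnit2
  set Z1 := (1 - Hh ^ s)⁻¹ with hZ1def
  set Z2 := (1 - W * Vh)⁻¹ with hZ2def
  have hZ1N : KNonneg K Z1 :=
    inv_knonneg_of_pow_tendsto hK (knonneg_pow hK hHhN s)
      (Matrix.mul_nonsing_inv _ hdet1) hpowHs
  have hZ2N : KNonneg K Z2 :=
    inv_knonneg_of_pow_tendsto hK hThN (Matrix.mul_nonsing_inv _ hdet2) hpowT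
  set Ths := twoStageThat F G V s with hThsdef'
  have hThsdef : Ths = Hh ^ s + (∑ j ∈ Finset.range s, Hh ^ j) * Vh := rfl
  have hThsN : KNonneg K Ths := by
    rw [hThsdef]
    exact knonneg_add hK (knonneg_pow hK hHhN s)
      (knonneg_mul (knonneg_sum hK (fun j _ => knonneg_pow hK hHhN j)) hVhN)
  have hfact : 1 - Ths = (1 - Hh ^ s) * (1 - W * Vh) := by
    have hSigma : (∑ j ∈ Finset.range s, Hh ^ j) = (1 - Hh ^ s) * W := by
      rw [geom_sum_eq_sub Hh W hW1 s, sub_mul, one_mul]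
    rw [hThsdef, hSigma, mul_assoc, mul_sub, mul_one]
    abel
  set Z := Z2 * Z1 with hZdef
  have hZright : (1 - Ths) * Z = 1 := by
    rw [hfact, hZdef, mul_assoc, ← mul_assoc (1 - W * Vh), Matrix.mul_nonsing_inv _ hdet2,
      one_mul, Matrix.mul_nonsing_inv _ hdet1]
  have hZleft : Z * (1 - Ths) = 1 := by
    rw [hfact, hZdef, mul_assoc, ← mul_assoc Z1, Matrix.nonsing_inv_mul _ hdet1, one_mul,
      Matrix.nonsing_inv_mul _ hdet2]
  have hZN : KNonneg K Z := knonneg_mul hZ2N hZ1N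
  have hZunit : IsUnit Z := ⟨⟨Z, 1 - Ths, hZleft, hZright⟩, rfl⟩
  obtain ⟨e, he⟩ := hK.2.2.2.2
  set u := Z.mulVec e with hudef
  have huint : u ∈ interior K := mulVec_interior hK hZunit hZN he
  have hue : u - Ths.mulVec u = e := by
    have h1 : (1 - Ths).mulVec u = e := by
      rw [hudef, Matrix.mulVec_mulVec, hZright, Matrix.one_mulVec]
    rwa [Matrix.sub_mulVec, Matrix.one_mulVec] at h1
  obtain ⟨t, ht, hte, -⟩ := int_absorb hK he u
  have htinv : (0:ℝ) < t⁻¹ := inv_pos.mpr ht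
  have h1 : e - t⁻¹ • u ∈ K := by
    have := cone_smul hK (le_of_lt htinv) hte
    rwa [smul_sub, smul_smul, inv_mul_cancel₀ (ne_of_gt ht), one_smul] at this
  set ε := min t⁻¹ (1/2 : ℝ) with hεdef
  have hε0 : 0 < ε := lt_min htinv (by norm_num)
  have hεle : ε ≤ t⁻¹ := min_le_left _ _
  have hε2 : ε ≤ 1/2 := min_le_right _ _
  have h2 : e - ε • u ∈ K := by
    have hsplit : e - ε • u = (e - t⁻¹ • u) + (t⁻¹ - ε) • u := by module
    rw [hsplit]
    exact cone_add hK h1 (cone_smul hK (by linarith) (interior_subset huint))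
  have hθpos : 0 < 1 - ε := by linarith
  have hθu : (1 - ε) • u - Ths.mulVec u ∈ K := by
    have h3 : Ths.mulVec u = u - e := by rw [← hue]; abel
    have h4 : (1 - ε) • u - Ths.mulVec u = e - ε • u := by rw [h3]; module
    rw [h4]; exact h2
  have hfinal : specRad Ths ≤ 1 - ε := specRad_le_of_cone hK hThsN huint hθpos hθu
  -- transfer back via similarity
  have hHj : ∀ j : ℕ, F * (F⁻¹ * G) ^ j * F⁻¹ = Hh ^ j := by
    intro j
    induction j with
    | zero => simp [hFF]
    | succ j ih =>
      rw [pow_succ, pow_succ, conj_mul hFF', ih, hHconj]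
  have hconjT : F * (twoStageT F G V s) * F⁻¹ = Ths := by
    rw [twoStageT, hThsdef]
    rw [mul_add, add_mul]
    congr 1
    · exact hHj s
    · rw [conj_mul hFF']
      congr 1
      · rw [Finset.mul_sum, Finset.sum_mul]
        exact Finset.sum_congr rfl fun j _ => hHj j
      · rw [hVh, ← mul_assoc F F⁻¹ V, hFF, one_mul]
  have htrans : specRad Ths = specRad (twoStageT F G V s) := by
    rw [← hconjT, specRad_conj hF]
  rw [← htrans]
  calc specRad Ths ≤ 1 - ε := hfinal
  _ < 1 := by linarith
end

section
/- Let A = U − V be a convergent regular splitting of A ∈ ℝ^{n×n} (i.e., U is invertible, U⁻¹ and V are entrywise nonnegative, and ρ(U⁻¹V) < 1) and let U = F − G be a convergent weak regular splitting of type II (i.e., F is invertible, F⁻¹ and G F⁻¹ are entrywise nonnegative, and ρ(F⁻¹G) < 1) such that V F⁻¹ G = G F⁻¹ V. Then for every integer s ≥ 1, the two-stage iteration matrix T_s satisfies ρ(T_s) < 1. -/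
open Matrix Finset Filter

namespace TwoStage

variable {n : ℕ}

abbrev Mnn (n : ℕ) := Matrix (Fin n) (Fin n) ℝ

/-- entrywise nonnegativity -/
def NN (M : Mnn n) : Prop := ∀ i j, 0 ≤ M i j

lemma NN.mul {A B : Mnn n} (hA : NN A) (hB : NN B) : NN (A * B) := fun i j => by
  rw [Matrix.mul_apply]
  exact Finset.sum_nonneg fun k _ => mul_nonneg (hA i k) (hB k j)

lemma NN.pow {A : Mnn n} (hA : NN A) (k : ℕ) : NN (A ^ k) := by
  induction k with
  | zero => intro i j; by_cases h : i = j <;> simp [pow_zero, Matrix.one_apply, h]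
  | succ k ih => rw [pow_succ]; exact ih.mul hA

lemma NN.add {A B : Mnn n} (hA : NN A) (hB : NN B) : NN (A + B) := fun i j =>
  add_nonneg (hA i j) (hB i j)

lemma NN.sum {s : Finset ℕ} {f : ℕ → Mnn n} (h : ∀ k ∈ s, NN (f k)) :
    NN (∑ k ∈ s, f k) := by
  intro i j
  rw [Matrix.sum_apply]
  exact Finset.sum_nonneg fun k hk => h k hk i j

lemma commute_inv_right {A B : Mnn n} (hB : IsUnit B) (h : A * B = B * A) :
    A * B⁻¹ = B⁻¹ * A := by
  have h1 : B * B⁻¹ = 1 := Matrix.mul_nonsing_inv B (Matrix.isUnit_iff_isUnit_det B |>.mp hB)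
  have h2 : B⁻¹ * B = 1 := Matrix.nonsing_inv_mul B (Matrix.isUnit_iff_isUnit_det B |>.mp hB)
  calc A * B⁻¹ = B⁻¹ * B * A * B⁻¹ := by rw [h2, Matrix.one_mul]
    _ = B⁻¹ * (A * B) * B⁻¹ := by rw [h]; noncomm_ring
    _ = B⁻¹ * A * (B * B⁻¹) := by noncomm_ring
    _ = B⁻¹ * A := by rw [h1, Matrix.mul_one]

end TwoStage

namespace TwoStage

section Analytic

variable {n : ℕ}

attribute [local instance] Matrix.linftyOpNormedRing Matrix.linftyOpNormedAlgebra

noncomputable local instance : CompleteSpace (Matrix (Fin n) (Fin n) ℂ) :=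
  (by infer_instance : CompleteSpace ((Fin n) → (Fin n) → ℂ))

lemma entry_norm_le (A : Matrix (Fin n) (Fin n) ℂ) (i j : Fin n) : ‖A i j‖ ≤ ‖A‖ := by
  have h1 : ‖A i j‖₊ ≤ ∑ j' : Fin n, ‖A i j'‖₊ :=
    Finset.single_le_sum (f := fun j' => ‖A i j'‖₊) (fun _ _ => by positivity) (Finset.mem_univ j)
  have h2 : (∑ j' : Fin n, ‖A i j'‖₊) ≤ Finset.univ.sup fun i => ∑ j' : Fin n, ‖A i j'‖₊ :=
    Finset.le_sup (f := fun i => ∑ j' : Fin n, ‖A i j'‖₊) (Finset.mem_univ i)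
  have := h1.trans h2
  rw [← Matrix.linfty_opNNNorm_def] at this
  exact_mod_cast this

/-- map to ℂ -/
noncomputable def cm (M : Mnn n) : Matrix (Fin n) (Fin n) ℂ := M.map Complex.ofReal

lemma cm_eq (M : Mnn n) : cm M = Complex.ofRealHom.mapMatrix M := rfl

lemma cm_mul (A B : Mnn n) : cm (A * B) = cm A * cm B := by
  simp [cm_eq, _root_.map_mul]

lemma cm_pow (A : Mnn n) (k : ℕ) : cm (A ^ k) = cm A ^ k := by
  simp [cm_eq, map_pow]

lemma cm_one : cm (1 : Mnn n) = 1 := by simp [cm_eq, _root_.map_one]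

lemma abs_le_specRad {M : Mnn n} {μ : ℂ} (h : μ ∈ spectrum ℂ (cm M)) :
    ‖μ‖ ≤ specRad M := by
  apply le_csSup (((Matrix.finite_spectrum _).image _).bddAbove)
  exact Set.mem_image_of_mem _ h

lemma tendsto_pow_entry_zero {M : Mnn n} (h : specRad M < 1) (i j : Fin n) :
    Tendsto (fun k => (M ^ k) i j) atTop (nhds 0) := by
  have hsr : spectralRadius ℂ (cm M) < 1 := by
    rcases Set.eq_empty_or_nonempty (spectrum ℂ (cm M)) with he | hne
    · rw [spectralRadius, he]; simp
    · have h0 : (0:ℝ) ≤ specRad M := by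
        obtain ⟨μ, hμ⟩ := hne
        exact (norm_nonneg μ).trans (abs_le_specRad hμ)
      refine lt_of_le_of_lt (iSup₂_le fun μ hμ => ?_)
        (show (ENNReal.ofReal (specRad M)) < 1 by
          rw [← ENNReal.ofReal_one]
          exact ENNReal.ofReal_lt_ofReal_iff_of_nonneg h0 |>.mpr h)
      have : ‖μ‖ ≤ specRad M := abs_le_specRad hμ
      rw [← enorm_eq_nnnorm, ← ofReal_norm]
      exact ENNReal.ofReal_le_ofReal this
  obtain ⟨r, hr1, hr2⟩ := ENNReal.lt_iff_exists_nnreal_btwn.mp hsr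
  have hgel := spectrum.pow_nnnorm_pow_one_div_tendsto_nhds_spectralRadius (cm M)
  have hev : ∀ᶠ k : ℕ in atTop, (‖(cm M) ^ k‖₊ : ENNReal) ^ (1 / (k:ℝ)) < (r : ENNReal) :=
    hgel.eventually_lt_const hr1
  have hev2 : ∀ᶠ k : ℕ in atTop, ‖(cm M) ^ k‖ ≤ (r:ℝ) ^ k := by
    filter_upwards [hev, Filter.eventually_ge_atTop 1] with k hk hk1
    have hkne : (k:ℝ) ≠ 0 := by positivity
    have : ((‖(cm M) ^ k‖₊ : ENNReal) ^ (1 / (k:ℝ))) ^ (k:ℝ) ≤ ((r:ENNReal)) ^ (k:ℝ) :=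
      ENNReal.rpow_le_rpow hk.le (by positivity)
    rw [← ENNReal.rpow_mul, one_div, inv_mul_cancel₀ hkne, ENNReal.rpow_one] at this
    have h3 : (‖(cm M) ^ k‖₊ : ENNReal) ≤ ((r ^ k : NNReal) : ENNReal) := by
      rw [ENNReal.coe_pow, ← ENNReal.rpow_natCast (r : ENNReal) k]; exact this
    have h4 : ‖(cm M) ^ k‖₊ ≤ r ^ k := ENNReal.coe_le_coe.mp h3
    calc ‖(cm M) ^ k‖ = ((‖(cm M) ^ k‖₊ : NNReal) : ℝ) := rfl
      _ ≤ ((r ^ k : NNReal) : ℝ) := by exact_mod_cast h4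
      _ = (r:ℝ) ^ k := by push_cast; ring
  have hr2' : (r:ℝ) < 1 := by exact_mod_cast hr2
  have hpow : Tendsto (fun k : ℕ => (r:ℝ) ^ k) atTop (nhds 0) :=
    tendsto_pow_atTop_nhds_zero_of_lt_one r.coe_nonneg hr2'
  apply squeeze_zero_norm' _ hpow
  filter_upwards [hev2] with k hk
  have : |(M ^ k) i j| = ‖(cm M ^ k) i j‖ := by
    rw [← cm_pow]
    simp [cm, Complex.norm_real]
  rw [Real.norm_eq_abs, this]
  exact (entry_norm_le _ i j).trans hk

end Analytic

end TwoStage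

namespace TwoStage

variable {n : ℕ}

lemma mulVec_pow_fixed {M : Matrix (Fin n) (Fin n) ℂ} {v : Fin n → ℂ} (h : M.mulVec v = v)
    (k : ℕ) : (M ^ k).mulVec v = v := by
  induction k with
  | zero => simp
  | succ k ih => rw [pow_succ, ← Matrix.mulVec_mulVec, h, ih]

lemma isUnit_one_sub {M : Mnn n}
    (hpow : ∀ i j, Tendsto (fun k => (M ^ k) i j) atTop (nhds 0)) :
    IsUnit (1 - M) := by
  rw [Matrix.isUnit_iff_isUnit_det, isUnit_iff_ne_zero]
  intro hdet
  obtain ⟨v, hv, hveq⟩ := (Matrix.exists_mulVec_eq_zero_iff).mpr hdet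
  have hMv : M.mulVec v = v := by
    have := hveq
    rw [Matrix.sub_mulVec, Matrix.one_mulVec, sub_eq_zero] at this
    exact this.symm
  have hfix : ∀ k, (M ^ k).mulVec v = v := by
    intro k
    induction k with
    | zero => simp
    | succ k ih => rw [pow_succ, ← Matrix.mulVec_mulVec, hMv, ih]
  apply hv
  funext i
  have h1 : Tendsto (fun k => ((M ^ k).mulVec v) i) atTop (nhds 0) := by
    have : ∀ k, ((M ^ k).mulVec v) i = ∑ j, (M ^ k) i j * v j := fun k => rfl
    simp_rw [this]
    have : Tendsto (fun k => ∑ j, (M ^ k) i j * v j) atTop (nhds (∑ j : Fin n, 0 * v j)) :=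
      tendsto_finset_sum _ fun j _ => (hpow i j).mul_const (v j)
    simpa using this
  have h2 : Tendsto (fun _ : ℕ => v i) atTop (nhds (v i)) := tendsto_const_nhds
  simp_rw [hfix] at h1
  exact (tendsto_nhds_unique h2 h1).trans rfl

lemma inv_one_sub_nonneg {M : Mnn n} (hM : NN M)
    (hpow : ∀ i j, Tendsto (fun k => (M ^ k) i j) atTop (nhds 0)) :
    NN (1 - M)⁻¹ := by
  have hu := isUnit_one_sub hpow
  have hdet : IsUnit (1 - M).det := (Matrix.isUnit_iff_isUnit_det _).mp hu
  have key : ∀ m : ℕ, (∑ k ∈ Finset.range m, M ^ k) = (1 - M ^ m) * (1 - M)⁻¹ := by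
    intro m
    have h1 : (∑ k ∈ Finset.range m, M ^ k) * (1 - M) = 1 - M ^ m := by
      have := geom_sum_mul M m
      calc (∑ k ∈ Finset.range m, M ^ k) * (1 - M)
          = -((∑ k ∈ Finset.range m, M ^ k) * (M - 1)) := by noncomm_ring
        _ = -(M ^ m - 1) := by rw [this]
        _ = 1 - M ^ m := by noncomm_ring
    calc (∑ k ∈ Finset.range m, M ^ k)
        = (∑ k ∈ Finset.range m, M ^ k) * ((1 - M) * (1 - M)⁻¹) := by
          rw [Matrix.mul_nonsing_inv _ hdet, Matrix.mul_one]
      _ = ((∑ k ∈ Finset.range m, M ^ k) * (1 - M)) * (1 - M)⁻¹ := by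
          rw [Matrix.mul_assoc]
      _ = (1 - M ^ m) * (1 - M)⁻¹ := by rw [h1]
  intro i j
  -- (1-M)⁻¹ i j is the limit of the partial sums
  have hlim : Tendsto (fun m => (((1 - M ^ m) * (1 - M)⁻¹ : Mnn n)) i j) atTop (nhds ((1 - M)⁻¹ i j)) := by
    have hee : ∀ m, (((1 - M ^ m) * (1 - M)⁻¹ : Mnn n)) i j
        = (1 - M)⁻¹ i j - ∑ l, (M ^ m) i l * (1 - M)⁻¹ l j := by
      intro m
      rw [Matrix.sub_mul, Matrix.one_mul, Matrix.sub_apply, Matrix.mul_apply]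
    simp_rw [hee]
    have h0 : Tendsto (fun m => ∑ l, (M ^ m) i l * (1 - M)⁻¹ l j) atTop
        (nhds (∑ l : Fin n, 0 * (1 - M)⁻¹ l j)) :=
      tendsto_finset_sum _ fun l _ => (hpow i l).mul_const _
    simp only [zero_mul, Finset.sum_const_zero] at h0
    simpa using (tendsto_const_nhds (x := (1 - M)⁻¹ i j)).sub h0
  refine ge_of_tendsto hlim ?_
  filter_upwards with m
  rw [← key m]
  exact NN.sum (fun k _ => hM.pow k) i j

end TwoStage

namespace TwoStage

variable {n : ℕ}

lemma specRad_lt_one_of_bounded_sums {T S : Mnn n} (hT : NN T)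
    (hb : ∀ m, ∀ i j, (∑ k ∈ Finset.range m, T ^ k) i j ≤ S i j) :
    specRad T < 1 := by
  have key : ∀ μ ∈ spectrum ℂ (cm T), ‖μ‖ < 1 := by
    intro μ hμ
    rw [spectrum.mem_iff] at hμ
    have hdet : (algebraMap ℂ _ μ - cm T).det = 0 := by
      by_contra hne
      exact hμ ((Matrix.isUnit_iff_isUnit_det _).mpr (isUnit_iff_ne_zero.mpr hne))
    obtain ⟨v, hv, hveq⟩ := (Matrix.exists_mulVec_eq_zero_iff).mpr hdet
    have hTv : (cm T).mulVec v = μ • v := by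
      rw [Matrix.sub_mulVec] at hveq
      have halg : (algebraMap ℂ (Matrix (Fin n) (Fin n) ℂ) μ).mulVec v = μ • v := by
        rw [Algebra.algebraMap_eq_smul_one, Matrix.smul_mulVec, Matrix.one_mulVec]
      rw [halg, sub_eq_zero] at hveq
      exact hveq.symm
    have hfix : ∀ k, ((cm T) ^ k).mulVec v = (μ ^ k) • v := by
      intro k
      induction k with
      | zero => simp
      | succ k ih =>
        rw [pow_succ, ← Matrix.mulVec_mulVec, hTv, Matrix.mulVec_smul, ih, smul_smul,
          pow_succ]
        rw [mul_comm]
    obtain ⟨i, hvi⟩ : ∃ i, v i ≠ 0 := Function.ne_iff.mp hv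
    set b := ‖v i‖ with hbdef
    have hbpos : 0 < b := by simpa [hbdef] using hvi
    set B := ∑ j, S i j * ‖v j‖ with hBdef
    -- single power bound
    have hstep : ∀ k, ‖μ‖ ^ k * b ≤ ∑ j, (T ^ k) i j * ‖v j‖ := by
      intro k
      have h1 : ((cm T ^ k).mulVec v) i = (μ ^ k) * v i := by rw [hfix]; rfl
      have h2 : ((cm T ^ k).mulVec v) i = ∑ j, ((T ^ k) i j : ℂ) * v j := by
        rw [Matrix.mulVec, dotProduct]
        congr 1
        ext j
        congr 1
        rw [← cm_pow]
        rfl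
      have h3 : ‖μ‖ ^ k * b = ‖∑ j, ((T ^ k) i j : ℂ) * v j‖ := by
        rw [← h2, h1, norm_mul, norm_pow]
      rw [h3]
      refine (norm_sum_le _ _).trans ?_
      apply Finset.sum_le_sum
      intro j _
      rw [norm_mul, Complex.norm_real, Real.norm_eq_abs, abs_of_nonneg (hT.pow k i j)]
    -- summed bound
    have hsum : ∀ m : ℕ, (∑ k ∈ Finset.range m, ‖μ‖ ^ k) * b ≤ B := by
      intro m
      rw [Finset.sum_mul]
      calc ∑ k ∈ Finset.range m, ‖μ‖ ^ k * b
          ≤ ∑ k ∈ Finset.range m, ∑ j, (T ^ k) i j * ‖v j‖ :=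
            Finset.sum_le_sum fun k _ => hstep k
        _ = ∑ j, (∑ k ∈ Finset.range m, (T ^ k) i j) * ‖v j‖ := by
            rw [Finset.sum_comm]
            simp_rw [Finset.sum_mul]
        _ ≤ B := by
            apply Finset.sum_le_sum
            intro j _
            have := hb m i j
            rw [Matrix.sum_apply] at this
            exact mul_le_mul_of_nonneg_right this (norm_nonneg _)
    by_contra hge
    push_neg at hge
    obtain ⟨m, hm⟩ := exists_nat_gt (B / b)
    have h1 : (m : ℝ) * b ≤ B := by
      refine le_trans ?_ (hsum m)
      apply mul_le_mul_of_nonneg_right _ hbpos.le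
      calc (m:ℝ) = ∑ _k ∈ Finset.range m, (1:ℝ) := by simp
        _ ≤ ∑ k ∈ Finset.range m, ‖μ‖ ^ k :=
            Finset.sum_le_sum fun k _ => one_le_pow₀ hge
    have h2 : B < m * b := by
      rw [div_lt_iff₀ hbpos] at hm
      exact hm
    linarith
  -- conclude
  unfold specRad
  rcases Set.eq_empty_or_nonempty (spectrum ℂ (cm T)) with he | hne
  · rw [show (Matrix.map T Complex.ofReal) = cm T from rfl, he]
    simp [Real.sSup_empty]
  · have hfin : ((fun z : ℂ => ‖z‖) '' spectrum ℂ (cm T)).Finite :=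
      (Matrix.finite_spectrum _).image _
    have hnem : ((fun z : ℂ => ‖z‖) '' spectrum ℂ (cm T)).Nonempty := hne.image _
    have := hnem.csSup_mem hfin
    obtain ⟨μ, hμ, hμeq⟩ := this
    rw [show (Matrix.map T Complex.ofReal) = cm T from rfl, ← hμeq]
    exact key μ hμ

lemma specRad_conj {F M : Mnn n} (hF : IsUnit F) :
    specRad (F * M * F⁻¹) = specRad M := by
  unfold specRad
  have hdet : IsUnit F.det := (Matrix.isUnit_iff_isUnit_det F).mp hF
  have h1 : F * F⁻¹ = 1 := Matrix.mul_nonsing_inv F hdet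
  have h2 : F⁻¹ * F = 1 := Matrix.nonsing_inv_mul F hdet
  have hc1 : cm F * cm F⁻¹ = 1 := by rw [← cm_mul, h1, cm_one]
  have hc2 : cm F⁻¹ * cm F = 1 := by rw [← cm_mul, h2, cm_one]
  let u : (Matrix (Fin n) (Fin n) ℂ)ˣ := ⟨cm F, cm F⁻¹, hc1, hc2⟩
  have key : (Matrix.map (F * M * F⁻¹) Complex.ofReal) = (u : Matrix (Fin n) (Fin n) ℂ) * cm M * ((u⁻¹ : (Matrix (Fin n) (Fin n) ℂ)ˣ) : Matrix (Fin n) (Fin n) ℂ) := by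
    show cm (F * M * F⁻¹) = _
    rw [cm_mul, cm_mul]
    rfl
  rw [key, spectrum.units_conjugate]
  rfl

end TwoStage

namespace TwoStage

variable {n : ℕ}

lemma geom_sum_eq {M : Mnn n} (hu : IsUnit (1 - M)) (m : ℕ) :
    (∑ k ∈ Finset.range m, M ^ k) = (1 - M ^ m) * (1 - M)⁻¹ := by
  have hdet : IsUnit (1 - M).det := (Matrix.isUnit_iff_isUnit_det _).mp hu
  have h1 : (∑ k ∈ Finset.range m, M ^ k) * (1 - M) = 1 - M ^ m := by
    have := geom_sum_mul M m
    calc (∑ k ∈ Finset.range m, M ^ k) * (1 - M)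
        = -((∑ k ∈ Finset.range m, M ^ k) * (M - 1)) := by noncomm_ring
      _ = -(M ^ m - 1) := by rw [this]
      _ = 1 - M ^ m := by noncomm_ring
  calc (∑ k ∈ Finset.range m, M ^ k)
      = (∑ k ∈ Finset.range m, M ^ k) * ((1 - M) * (1 - M)⁻¹) := by
        rw [Matrix.mul_nonsing_inv _ hdet, Matrix.mul_one]
    _ = ((∑ k ∈ Finset.range m, M ^ k) * (1 - M)) * (1 - M)⁻¹ := by rw [Matrix.mul_assoc]
    _ = (1 - M ^ m) * (1 - M)⁻¹ := by rw [h1]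

theorem main {n : ℕ} (A U V F G : Matrix (Fin n) (Fin n) ℝ)
    (hAUV : A = U - V) (hU : IsUnit U)
    (hUinv : ∀ i j, 0 ≤ U⁻¹ i j) (hV : ∀ i j, 0 ≤ V i j)
    (houterconv : specRad (U⁻¹ * V) < 1)
    (hUFG : U = F - G) (hF : IsUnit F)
    (hFinv : ∀ i j, 0 ≤ F⁻¹ i j) (hGF : ∀ i j, 0 ≤ (G * F⁻¹) i j)
    (hinnerconv : specRad (F⁻¹ * G) < 1)
    (hcomm : V * F⁻¹ * G = G * F⁻¹ * V) :
    ∀ s : ℕ, 1 ≤ s →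
      specRad ((F⁻¹ * G) ^ s + (∑ j ∈ Finset.range s, (F⁻¹ * G) ^ j) * (F⁻¹ * V)) < 1 := by
  intro s hs
  have hFdet : IsUnit F.det := (Matrix.isUnit_iff_isUnit_det F).mp hF
  have hF1 : F * F⁻¹ = 1 := Matrix.mul_nonsing_inv F hFdet
  have hF2 : F⁻¹ * F = 1 := Matrix.nonsing_inv_mul F hFdet
  have cancel : ∀ X : Mnn n, F * (F⁻¹ * X) = X := fun X => by
    rw [← Matrix.mul_assoc, hF1, Matrix.one_mul]
  have cancel' : ∀ X : Mnn n, F⁻¹ * (F * X) = X := fun X => by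
    rw [← Matrix.mul_assoc, hF2, Matrix.one_mul]
  set Hh := G * F⁻¹ with hHhdef
  set Ph := V * F⁻¹ with hPhdef
  have hHh : NN Hh := hGF
  have hPh : NN Ph := NN.mul hV hFinv
  -- spectral radius of Hh
  have hHhconj : Hh = F * (F⁻¹ * G) * F⁻¹ := by
    rw [← Matrix.mul_assoc, hF1, Matrix.one_mul]
  have hHhspec : specRad Hh < 1 := by rw [hHhconj, specRad_conj hF]; exact hinnerconv
  have hHpow : ∀ i j, Tendsto (fun k => (Hh ^ k) i j) atTop (nhds 0) :=
    tendsto_pow_entry_zero hHhspec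
  have hU1 : IsUnit (1 - Hh) := isUnit_one_sub hHpow
  have hU1det : IsUnit (1 - Hh).det := (Matrix.isUnit_iff_isUnit_det _).mp hU1
  have hIHhinv : NN (1 - Hh)⁻¹ := inv_one_sub_nonneg hHh hHpow
  -- R
  set R := (1 - Hh)⁻¹ * Ph with hRdef
  have hR : NN R := hIHhinv.mul hPh
  have hUfact : U = (1 - Hh) * F := by
    rw [hUFG, Matrix.sub_mul, Matrix.one_mul, hHhdef, Matrix.mul_assoc, hF2, Matrix.mul_one]
  have hReq : R = F * (U⁻¹ * V) * F⁻¹ := by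
    rw [hUfact, Matrix.mul_inv_rev]
    calc (1 - Hh)⁻¹ * Ph = F * (F⁻¹ * ((1 - Hh)⁻¹ * Ph)) := (cancel _).symm
      _ = F * (F⁻¹ * (1 - Hh)⁻¹ * V) * F⁻¹ := by
          rw [hPhdef]; simp only [Matrix.mul_assoc]
  have hRspec : specRad R < 1 := by rw [hReq, specRad_conj hF]; exact houterconv
  have hRpow : ∀ i j, Tendsto (fun k => (R ^ k) i j) atTop (nhds 0) :=
    tendsto_pow_entry_zero hRspec
  have hUR : IsUnit (1 - R) := isUnit_one_sub hRpow
  have hIRinv : NN (1 - R)⁻¹ := inv_one_sub_nonneg hR hRpow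
  -- commutation facts
  have hHP : Hh * Ph = Ph * Hh := by
    rw [hHhdef, hPhdef]
    calc G * F⁻¹ * (V * F⁻¹) = (G * F⁻¹ * V) * F⁻¹ := by simp only [Matrix.mul_assoc]
      _ = (V * F⁻¹ * G) * F⁻¹ := by rw [hcomm]
      _ = V * F⁻¹ * (G * F⁻¹) := by simp only [Matrix.mul_assoc]
  have hinv : ∀ X : Mnn n, X * Hh = Hh * X → X * (1 - Hh)⁻¹ = (1 - Hh)⁻¹ * X := by
    intro X hX
    apply commute_inv_right hU1
    calc X * (1 - Hh) = X - X * Hh := by noncomm_ring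
      _ = X - Hh * X := by rw [hX]
      _ = (1 - Hh) * X := by noncomm_ring
  -- W
  set W := ∑ j ∈ Finset.range s, Hh ^ j with hWdef
  have hW : NN W := NN.sum fun k _ => hHh.pow k
  have hWHc : W * Hh = Hh * W := by
    rw [hWdef, Finset.sum_mul, Finset.mul_sum]
    exact Finset.sum_congr rfl fun k _ => by rw [← pow_succ, ← pow_succ']
  have hWgeom : (1 - Hh) * W = 1 - Hh ^ s := by
    have h1 : W * (1 - Hh) = 1 - Hh ^ s := by
      have := geom_sum_mul Hh s
      calc W * (1 - Hh) = -(W * (Hh - 1)) := by noncomm_ring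
        _ = -(Hh ^ s - 1) := by rw [hWdef, this]
        _ = 1 - Hh ^ s := by noncomm_ring
    calc (1 - Hh) * W = W - Hh * W := by noncomm_ring
      _ = W - W * Hh := by rw [hWHc]
      _ = W * (1 - Hh) := by noncomm_ring
      _ = 1 - Hh ^ s := h1
  -- Th
  set Th := Hh ^ s + W * Ph with hThdef
  have hTNN : NN Th := (hHh.pow s).add (hW.mul hPh)
  have hWP : W * Ph = (1 - Hh ^ s) * R := by
    have hWinv : W * (1 - Hh)⁻¹ = (1 - Hh)⁻¹ * W := hinv W hWHc
    calc W * Ph = W * ((1 - Hh) * (1 - Hh)⁻¹) * Ph := by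
          rw [Matrix.mul_nonsing_inv _ hU1det, Matrix.mul_one]
      _ = (W * (1 - Hh)) * ((1 - Hh)⁻¹ * Ph) := by simp only [Matrix.mul_assoc]
      _ = ((1 - Hh) * W) * ((1 - Hh)⁻¹ * Ph) := by
          rw [show W * (1 - Hh) = (1 - Hh) * W from by
            calc W * (1 - Hh) = W - W * Hh := by noncomm_ring
              _ = W - Hh * W := by rw [hWHc]
              _ = (1 - Hh) * W := by noncomm_ring]
      _ = (1 - Hh ^ s) * R := by rw [hWgeom, hRdef]
  have hfact : 1 - Th = (1 - Hh ^ s) * (1 - R) := by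
    rw [hThdef, hWP]
    noncomm_ring
  -- 1 - Hh^s unit and nonneg inverse
  have hspos : 0 < s := hs
  have hmulat : Tendsto (fun k : ℕ => s * k) atTop atTop :=
    Filter.tendsto_atTop_mono (fun k => Nat.le_mul_of_pos_left k hspos) Filter.tendsto_id
  have hpow_s : ∀ i j, Tendsto (fun k => ((Hh ^ s) ^ k) i j) atTop (nhds 0) := by
    intro i j
    have := (hHpow i j).comp hmulat
    simp only [Function.comp_def] at this
    simpa [pow_mul] using this
  have hU1s : IsUnit (1 - Hh ^ s) := isUnit_one_sub hpow_s
  have hSinv : NN (1 - Hh ^ s)⁻¹ := inv_one_sub_nonneg (hHh.pow s) hpow_s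
  have hUnit : IsUnit (1 - Th) := by rw [hfact]; exact hU1s.mul hUR
  have hS : NN (1 - Th)⁻¹ := by
    rw [hfact, Matrix.mul_inv_rev]
    exact hIRinv.mul hSinv
  -- bounded partial sums
  have hb : ∀ m, ∀ i j, (∑ k ∈ Finset.range m, Th ^ k) i j ≤ (1 - Th)⁻¹ i j := by
    intro m i j
    rw [geom_sum_eq hUnit m]
    have : (((1 - Th ^ m) * (1 - Th)⁻¹ : Mnn n)) i j
        = (1 - Th)⁻¹ i j - (Th ^ m * (1 - Th)⁻¹ : Mnn n) i j := by
      rw [Matrix.sub_mul, Matrix.one_mul, Matrix.sub_apply]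
    rw [this]
    have h0 : 0 ≤ (Th ^ m * (1 - Th)⁻¹ : Mnn n) i j := ((hTNN.pow m).mul hS) i j
    linarith
  have hThspec : specRad Th < 1 := specRad_lt_one_of_bounded_sums hTNN hb
  -- conjugate back
  have hpowconj : ∀ j : ℕ, (F⁻¹ * G) ^ j = F⁻¹ * Hh ^ j * F := by
    intro j
    induction j with
    | zero => simp [hF2]
    | succ j ih =>
      rw [pow_succ, ih, pow_succ]
      calc F⁻¹ * Hh ^ j * F * (F⁻¹ * G) = F⁻¹ * Hh ^ j * (F * (F⁻¹ * G)) := by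
            simp only [Matrix.mul_assoc]
        _ = F⁻¹ * Hh ^ j * G := by rw [cancel]
        _ = F⁻¹ * (Hh ^ j * Hh) * F := by
            rw [hHhdef]
            simp only [Matrix.mul_assoc, hF2, Matrix.mul_one]
  have hTT : Th = F * ((F⁻¹ * G) ^ s + (∑ j ∈ Finset.range s, (F⁻¹ * G) ^ j) * (F⁻¹ * V)) * F⁻¹ := by
    have hsum : (∑ j ∈ Finset.range s, (F⁻¹ * G) ^ j) = F⁻¹ * W * F := by
      rw [hWdef, Finset.mul_sum, Finset.sum_mul]
      exact Finset.sum_congr rfl fun k _ => hpowconj k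
    rw [hpowconj s, hsum, Matrix.mul_add, Matrix.add_mul, hThdef]
    congr 1
    · simp only [Matrix.mul_assoc, cancel, hF1, Matrix.mul_one]
    · simp only [Matrix.mul_assoc, cancel, hF1, Matrix.mul_one]; rfl
  have hfinal := specRad_conj (M := (F⁻¹ * G) ^ s + (∑ j ∈ Finset.range s, (F⁻¹ * G) ^ j) * (F⁻¹ * V)) hF
  rw [← hfinal, ← hTT]
  exact hThspec

end TwoStage


theorem stmt_7 {n : ℕ} (A U V F G : Matrix (Fin n) (Fin n) ℝ)
    (hAUV : A = U - V) (hU : IsUnit U)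
    (hUinv : ∀ i j, 0 ≤ U⁻¹ i j) (hV : ∀ i j, 0 ≤ V i j)
    (houterconv : specRad (U⁻¹ * V) < 1)
    (hUFG : U = F - G) (hF : IsUnit F)
    (hFinv : ∀ i j, 0 ≤ F⁻¹ i j) (hGF : ∀ i j, 0 ≤ (G * F⁻¹) i j)
    (hinnerconv : specRad (F⁻¹ * G) < 1)
    (hcomm : V * F⁻¹ * G = G * F⁻¹ * V) :
    ∀ s : ℕ, 1 ≤ s → specRad (twoStageT F G V s) < 1 := by
  intro s hs
  have h := TwoStage.main A U V F G hAUV hU hUinv hV houterconv hUFG hF hFinv hGF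
    hinnerconv hcomm s hs
  unfold twoStageT
  exact h
end
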